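/- arXiv:0708.1556 — 11 statements merged into one kernel-verified Lean document; each statement's English description precedes it below -/
import Mathlib

section
/- For any topologies T and U, the Kelleyfication of the product topology T × U equals the Kelleyfication of the product topology (kT) × (kU) of the Kelleyfications; more generally, for any family (T_i)_{i ∈ I} of topologies indexed by a set I, the Kelleyfication of the Tihonov product topology ∏_i T_i equals the Kelleyfication of the product topology ∏_i (k T_i). -/
open Set Filter Topology

/-- The Kelleyfication of a topology `T`: a set is open iff its trace on every `T`-compact
set agrees with the trace of some `T`-open set. -/
def Kelley {X : Type*} (T : TopologicalSpace X) : TopologicalSpace X where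
  IsOpen U := ∀ K : Set X, @IsCompact X T K → ∃ V : Set X, T.IsOpen V ∧ U ∩ K = V ∩ K
  isOpen_univ K _ := ⟨univ, T.isOpen_univ, rfl⟩
  isOpen_inter := by
    intro s t hs ht K hK
    obtain ⟨Vs, hVs, hsK⟩ := hs K hK
    obtain ⟨Vt, hVt, htK⟩ := ht K hK
    refine ⟨Vs ∩ Vt, T.isOpen_inter _ _ hVs hVt, ?_⟩
    ext x
    have h1 := Set.ext_iff.mp hsK x
    have h2 := Set.ext_iff.mp htK x
    simp only [Set.mem_inter_iff] at *
    tauto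
  isOpen_sUnion := by
    intro S hS K hK
    choose! V hV1 hV2 using fun t (ht : t ∈ S) => hS t ht K hK
    refine ⟨⋃ t ∈ S, V t, ?_, ?_⟩
    · letI := T
      exact isOpen_biUnion fun t ht => hV1 t ht
    · ext x
      simp only [Set.mem_inter_iff, Set.mem_sUnion, Set.mem_iUnion, exists_prop]
      constructor
      · rintro ⟨⟨t, htS, hxt⟩, hxK⟩
        have h := Set.ext_iff.mp (hV2 t htS) x
        simp only [Set.mem_inter_iff] at h
        exact ⟨⟨t, htS, (h.mp ⟨hxt, hxK⟩).1⟩, hxK⟩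
      · rintro ⟨⟨t, htS, hxt⟩, hxK⟩
        have h := Set.ext_iff.mp (hV2 t htS) x
        simp only [Set.mem_inter_iff] at h
        exact ⟨⟨t, htS, (h.mpr ⟨hxt, hxK⟩).1⟩, hxK⟩

/-- The k-extension of a topology `T`: like the Kelleyfication, but quantifying only over
`T`-closed `T`-compact sets. -/
def KelleyEx {X : Type*} (T : TopologicalSpace X) : TopologicalSpace X where
  IsOpen U := ∀ K : Set X, @IsCompact X T K → @IsClosed X T K →
    ∃ V : Set X, T.IsOpen V ∧ U ∩ K = V ∩ K
  isOpen_univ K _ _ := ⟨univ, T.isOpen_univ, rfl⟩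
  isOpen_inter := by
    intro s t hs ht K hK hKc
    obtain ⟨Vs, hVs, hsK⟩ := hs K hK hKc
    obtain ⟨Vt, hVt, htK⟩ := ht K hK hKc
    refine ⟨Vs ∩ Vt, T.isOpen_inter _ _ hVs hVt, ?_⟩
    ext x
    have h1 := Set.ext_iff.mp hsK x
    have h2 := Set.ext_iff.mp htK x
    simp only [Set.mem_inter_iff] at *
    tauto
  isOpen_sUnion := by
    intro S hS K hK hKc
    choose! V hV1 hV2 using fun t (ht : t ∈ S) => hS t ht K hK hKc
    refine ⟨⋃ t ∈ S, V t, ?_, ?_⟩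
    · letI := T
      exact isOpen_biUnion fun t ht => hV1 t ht
    · ext x
      simp only [Set.mem_inter_iff, Set.mem_sUnion, Set.mem_iUnion, exists_prop]
      constructor
      · rintro ⟨⟨t, htS, hxt⟩, hxK⟩
        have h := Set.ext_iff.mp (hV2 t htS) x
        simp only [Set.mem_inter_iff] at h
        exact ⟨⟨t, htS, (h.mp ⟨hxt, hxK⟩).1⟩, hxK⟩
      · rintro ⟨⟨t, htS, hxt⟩, hxK⟩
        have h := Set.ext_iff.mp (hV2 t htS) x
        simp only [Set.mem_inter_iff] at h
        exact ⟨⟨t, htS, (h.mpr ⟨hxt, hxK⟩).1⟩, hxK⟩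

/-- A topology is compactly generated iff it is Hausdorff and equals its Kelleyfication. -/
def IsCG {X : Type*} (T : TopologicalSpace X) : Prop :=
  @T2Space X T ∧ Kelley T = T

/-- Local compactness in the sense of the paper: every point of an open set `V` has an
open neighbourhood contained in a compact subset of `V`. -/
def LocCompact {Y : Type*} (t : TopologicalSpace Y) : Prop :=
  ∀ y : Y, ∀ V : Set Y, t.IsOpen V → y ∈ V →
    ∃ K U : Set Y, y ∈ U ∧ t.IsOpen U ∧ U ⊆ K ∧ K ⊆ V ∧ @IsCompact Y t K

/-- A real compactly generated vector space: a compactly generated topology for which the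
algebraic operations are continuous from the Kelleyfications of the product topologies. -/
def IsCGVS {X : Type*} [AddCommGroup X] [Module ℝ X] (T : TopologicalSpace X) : Prop :=
  IsCG T ∧
  Continuous[Kelley (@instTopologicalSpaceProd X X T T), T] (fun p : X × X => p.1 + p.2) ∧
  Continuous[Kelley (@instTopologicalSpaceProd ℝ X inferInstance T), T]
    (fun p : ℝ × X => p.1 • p.2)

/-- Sequential completeness of a topologized additive group: every Cauchy sequence converges. -/
def SeqComplete {X : Type*} [AddCommGroup X] (U : TopologicalSpace X) : Prop :=
  ∀ u : ℕ → X, (∀ V ∈ @nhds X U 0, ∃ N : ℕ, ∀ m ≥ N, ∀ n ≥ N, u m - u n ∈ V) →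
    ∃ x : X, Filter.Tendsto u Filter.atTop (@nhds X U x)

/-- Seip-convenient space: a compactly generated real vector space whose topology is the
Kelleyfication of a sequentially complete Hausdorff locally convex vector topology. -/
def IsSeipConvenient {X : Type*} [AddCommGroup X] [Module ℝ X] (T : TopologicalSpace X) : Prop :=
  IsCGVS T ∧ ∃ U : TopologicalSpace X,
    @IsTopologicalAddGroup X U _ ∧ @ContinuousSMul ℝ X _ _ U ∧
    @LocallyConvexSpace ℝ X _ _ _ _ U ∧ @T2Space X U ∧ SeqComplete U ∧ T = Kelley U

/-- The compact-open topology on the full function space, generated by the usual subbasis. -/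
def coTop {X Y : Type*} (tX : TopologicalSpace X) (tY : TopologicalSpace Y) :
    TopologicalSpace (X → Y) :=
  TopologicalSpace.generateFrom
    {S | ∃ (K : Set X) (V : Set Y), @IsCompact X tX K ∧ tY.IsOpen V ∧ S = {f | f '' K ⊆ V}}

/-- `γ` is Riemann integrable to `x` on `[a,b]` with respect to the topology `T`. -/
def RiemannIntegrableTo {E : Type*} [AddCommGroup E] [Module ℝ E]
    (T : TopologicalSpace E) (a b : ℝ) (γ : ℝ → E) (x : E) : Prop :=
  ∀ V ∈ @nhds E T x, ∃ δ : ℝ, 0 < δ ∧ ∀ (k : ℕ) (t s : ℕ → ℝ),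
    t 0 = a → t k = b → (∀ i < k, t i ≤ t (i + 1)) →
    (∀ i < k, t (i + 1) - t i < δ) →
    (∀ i < k, t i ≤ s i ∧ s i ≤ t (i + 1)) →
    (∑ i ∈ Finset.range k, (t (i + 1) - t i) • γ (s i)) ∈ V

/-- `c` is differentiable to `x` at `t₀` (within `J`) with respect to the topology `T`. -/
def DiffTo {E : Type*} [AddCommGroup E] [Module ℝ E] (T : TopologicalSpace E)
    (J : Set ℝ) (c : ℝ → E) (t₀ : ℝ) (x : E) : Prop :=
  ∀ V ∈ @nhds E T x, ∃ δ : ℝ, 0 < δ ∧ ∀ t : ℝ, t₀ + t ∈ J → 0 < |t| → |t| < δ →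
    t⁻¹ • (c (t₀ + t) - c t₀) ∈ V

lemma kelley_le {X : Type*} (T : TopologicalSpace X) : Kelley T ≤ T := by
  rw [TopologicalSpace.le_def]
  intro s hs
  exact fun K _ => ⟨s, hs, rfl⟩

lemma kelley_isOpen_iff {X : Type*} (T : TopologicalSpace X) (s : Set X) :
    (Kelley T).IsOpen s ↔
      ∀ K : Set X, @IsCompact X T K → ∃ V : Set X, T.IsOpen V ∧ s ∩ K = V ∩ K :=
  Iff.rfl

/-- A trace condition is equivalent to openness in the induced (subspace) topology. -/
lemma trace_open_iff {X : Type*} (t : TopologicalSpace X) (K s : Set X) :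
    (∃ V, t.IsOpen V ∧ s ∩ K = V ∩ K) ↔
      IsOpen[t.induced (Subtype.val : K → X)] ((Subtype.val : K → X) ⁻¹' s) := by
  constructor
  · rintro ⟨V, hV, hVs⟩
    refine ⟨V, hV, ?_⟩
    ext ⟨x, hx⟩
    have := Set.ext_iff.mp hVs x
    simp only [Set.mem_inter_iff, mem_preimage] at this ⊢
    tauto
  · rintro ⟨V, hV, hpre⟩
    refine ⟨V, hV, ?_⟩
    ext x
    simp only [Set.mem_inter_iff]
    constructor
    · rintro ⟨hxs, hxK⟩
      have := Set.ext_iff.mp hpre ⟨x, hxK⟩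
      simp only [mem_preimage] at this
      exact ⟨this.mpr hxs, hxK⟩
    · rintro ⟨hxV, hxK⟩
      have := Set.ext_iff.mp hpre ⟨x, hxK⟩
      simp only [mem_preimage] at this
      exact ⟨this.mp hxV, hxK⟩

/-- On a compact set, the Kelleyfication induces the original subspace topology. -/
lemma induced_val_kelley {X : Type*} (T : TopologicalSpace X) (K : Set X)
    (hK : @IsCompact X T K) :
    (Kelley T).induced (Subtype.val : K → X) = T.induced Subtype.val := by
  refine le_antisymm (induced_mono (kelley_le T)) ?_
  rw [TopologicalSpace.le_def]
  intro s hs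
  obtain ⟨W, hW, hWs⟩ := (@isOpen_induced_iff _ _ (Kelley T) s Subtype.val).mp hs
  obtain ⟨V, hV, hVW⟩ := hW K hK
  refine (@isOpen_induced_iff _ _ T s Subtype.val).mpr ⟨V, hV, ?_⟩
  rw [← hWs]
  ext ⟨x, hx⟩
  have := Set.ext_iff.mp hVW x
  simp only [Set.mem_inter_iff, mem_preimage] at this ⊢
  tauto

/-- If the range of `g` lies in a compact set, inducing along `g` from the
Kelleyfication gives the same topology as inducing from the original topology. -/
lemma induced_kelley_of_range {X W : Type*} (T : TopologicalSpace X) (g : W → X)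
    (K : Set X) (hK : @IsCompact X T K) (hr : Set.range g ⊆ K) :
    (Kelley T).induced g = T.induced g := by
  set g' : W → K := fun w => ⟨g w, hr ⟨w, rfl⟩⟩ with hg'
  have hcomp : (Subtype.val : K → X) ∘ g' = g := rfl
  calc (Kelley T).induced g = ((Kelley T).induced (Subtype.val : K → X)).induced g' := by
        rw [induced_compose, hcomp]
    _ = (T.induced (Subtype.val : K → X)).induced g' := by rw [induced_val_kelley T K hK]
    _ = T.induced g := by rw [induced_compose, hcomp]

/-- If `t2 ≤ t1` and the two topologies induce the same subspace topology on every
`t1`-compact set, then they have the same Kelleyfication. -/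
lemma kelley_eq_of {X : Type*} (t1 t2 : TopologicalSpace X) (hle : t2 ≤ t1)
    (hind : ∀ K : Set X, @IsCompact X t1 K →
      t2.induced (Subtype.val : K → X) = t1.induced Subtype.val) :
    Kelley t1 = Kelley t2 := by
  have hcomp : ∀ K : Set X, @IsCompact X t1 K ↔ @IsCompact X t2 K := by
    intro K
    constructor
    · intro hK
      have h1 : @CompactSpace K (t1.induced Subtype.val) :=
        (@isCompact_iff_compactSpace X t1 K).mp hK
      have h2 : @CompactSpace K (t2.induced Subtype.val) := by
        rw [hind K hK]; exact h1
      exact (@isCompact_iff_compactSpace X t2 K).mpr h2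
    · intro hK
      have hid : @Continuous X X t2 t1 id := continuous_id_iff_le.mpr hle
      have := @IsCompact.image X X t2 t1 K id hK hid
      rwa [Set.image_id] at this
  refine TopologicalSpace.ext ?_
  funext s
  refine propext ?_
  show (∀ K : Set X, @IsCompact X t1 K → ∃ V, t1.IsOpen V ∧ s ∩ K = V ∩ K) ↔
       (∀ K : Set X, @IsCompact X t2 K → ∃ V, t2.IsOpen V ∧ s ∩ K = V ∩ K)
  constructor
  · intro h K hK
    have hK1 := (hcomp K).mpr hK
    rw [trace_open_iff, hind K hK1, ← trace_open_iff]
    exact h K hK1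
  · intro h K hK
    rw [trace_open_iff, ← hind K hK, ← trace_open_iff]
    exact h K ((hcomp K).mp hK)

/-- The Kelleyfication of a product topology equals the Kelleyfication of the
product of the Kelleyfications, both for binary products and for arbitrary (Tihonov)
products of families of topologies. -/
theorem kelley_prod_kelley {X Y : Type*} (T : TopologicalSpace X) (U : TopologicalSpace Y)
    {I : Type*} {Z : I → Type*} (Ts : ∀ i, TopologicalSpace (Z i)) :
    Kelley (@instTopologicalSpaceProd X Y T U) =
      Kelley (@instTopologicalSpaceProd X Y (Kelley T) (Kelley U)) ∧
    Kelley (@Pi.topologicalSpace I Z Ts) =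
      Kelley (@Pi.topologicalSpace I Z fun i => Kelley (Ts i)) := by
  constructor
  · apply kelley_eq_of
    · exact inf_le_inf (induced_mono (kelley_le T)) (induced_mono (kelley_le U))
    · intro K hK
      have hA : @IsCompact X T (Prod.fst '' K) := by
        letI := T; letI := U
        exact hK.image continuous_fst
      have hB : @IsCompact Y U (Prod.snd '' K) := by
        letI := T; letI := U
        exact hK.image continuous_snd
      have hrA : Set.range (Prod.fst ∘ (Subtype.val : K → X × Y)) ⊆ Prod.fst '' K := by
        rintro _ ⟨⟨p, hp⟩, rfl⟩; exact ⟨p, hp, rfl⟩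
      have hrB : Set.range (Prod.snd ∘ (Subtype.val : K → X × Y)) ⊆ Prod.snd '' K := by
        rintro _ ⟨⟨p, hp⟩, rfl⟩; exact ⟨p, hp, rfl⟩
      show ((Kelley T).induced Prod.fst ⊓ (Kelley U).induced Prod.snd).induced
          (Subtype.val : K → X × Y) =
        (T.induced Prod.fst ⊓ U.induced Prod.snd).induced Subtype.val
      rw [induced_inf, induced_inf, induced_compose, induced_compose, induced_compose,
        induced_compose, induced_kelley_of_range T _ _ hA hrA,
        induced_kelley_of_range U _ _ hB hrB]
  · apply kelley_eq_of
    · exact iInf_mono fun i => induced_mono (kelley_le (Ts i))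
    · intro K hK
      have hA : ∀ i, @IsCompact (Z i) (Ts i) ((fun f => f i) '' K) := by
        intro i
        letI : ∀ i, TopologicalSpace (Z i) := Ts
        exact hK.image (continuous_apply i)
      have hr : ∀ i, Set.range ((fun f => f i) ∘ (Subtype.val : K → ∀ j, Z j)) ⊆
          (fun f => f i) '' K := by
        rintro i _ ⟨⟨p, hp⟩, rfl⟩; exact ⟨p, hp, rfl⟩
      show (⨅ i, (Kelley (Ts i)).induced fun f => f i).induced
          (Subtype.val : K → ∀ j, Z j) =
        (⨅ i, (Ts i).induced fun f => f i).induced Subtype.val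
      rw [induced_iInf, induced_iInf]
      exact iInf_congr fun i => by
        rw [induced_compose, induced_compose,
          induced_kelley_of_range (Ts i) _ _ (hA i) (hr i)]
end

section
/- Let E = (X, T) be a real compactly generated vector space and let S be a vector subspace of X which is T-closed. Then S, equipped with the subspace topology T ∩ S and the restricted linear operations, is again a real compactly generated vector space. If moreover E is Seip-convenient, then so is this subspace: there is a locally convex topology on S making it a sequentially complete Hausdorff locally convex topological vector space whose Kelleyfication is T ∩ S. -/
open Set Filter Topology

theorem kelley_isOpen_of_isOpen {X : Type*} {t : TopologicalSpace X} {U : Set X}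
    (h : t.IsOpen U) : (Kelley t).IsOpen U := fun K _ => ⟨U, h, rfl⟩

theorem kelley_continuous {X Y : Type*} {tX : TopologicalSpace X} {tY : TopologicalSpace Y}
    {f : X → Y} (hf : Continuous[tX, tY] f) : Continuous[Kelley tX, Kelley tY] f := by
  rw [continuous_def]
  intro U hU K hK
  obtain ⟨V, hV, hVK⟩ := hU (f '' K) (@IsCompact.image X Y tX tY K f hK hf)
  refine ⟨f ⁻¹' V, (continuous_def.mp hf) V hV, ?_⟩
  ext x
  simp only [Set.mem_inter_iff, Set.mem_preimage]
  constructor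
  · rintro ⟨hx, hxK⟩
    have := Set.ext_iff.mp hVK (f x)
    simp only [Set.mem_inter_iff] at this
    exact ⟨(this.mp ⟨hx, mem_image_of_mem f hxK⟩).1, hxK⟩
  · rintro ⟨hx, hxK⟩
    have := Set.ext_iff.mp hVK (f x)
    simp only [Set.mem_inter_iff] at this
    exact ⟨(this.mpr ⟨hx, mem_image_of_mem f hxK⟩).1, hxK⟩

/-- The key lemma: if `S` is closed for `Kelley t`, then every `Kelley (induced)`-open subset
of the subtype is induced from a `Kelley t`-open set. -/
theorem kelley_induced_of_closed {X : Type*} {t : TopologicalSpace X} {S : Set X}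
    (hS : @IsClosed X (Kelley t) S) (A : Set S)
    (hA : (Kelley (t.induced (Subtype.val : S → X))).IsOpen A) :
    ∃ B : Set X, (Kelley t).IsOpen B ∧ A = Subtype.val ⁻¹' B := by
  refine ⟨Subtype.val '' A ∪ Sᶜ, ?_, ?_⟩
  · intro K hK
    letI := t
    obtain ⟨V₀, hV₀', hV₀K⟩ := hS.isOpen_compl K hK
    have hV₀ : IsOpen V₀ := hV₀'
    have hSK : S ∩ K = K ∩ V₀ᶜ := by
      ext x
      have := Set.ext_iff.mp hV₀K x
      simp only [Set.mem_inter_iff, Set.mem_compl_iff] at *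
      tauto
    have hSKc : @IsCompact X t (S ∩ K) := by
      rw [hSK]
      exact hK.inter_right hV₀.isClosed_compl
    letI tS := t.induced (Subtype.val : S → X)
    have hC : @IsCompact S tS (Subtype.val ⁻¹' K) := by
      rw [IsEmbedding.subtypeVal.isCompact_iff, Subtype.image_preimage_coe]
      exact hSKc
    obtain ⟨V, hV, hVK⟩ := hA _ hC
    obtain ⟨W, hW', rfl⟩ := isOpen_induced_iff.mp hV
    have hW : IsOpen W := hW'
    refine ⟨W ∪ V₀, hW.union hV₀, ?_⟩
    ext x
    simp only [Set.mem_inter_iff, Set.mem_union, Set.mem_image, Set.mem_compl_iff]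
    constructor
    · rintro ⟨hx, hxK⟩
      refine ⟨?_, hxK⟩
      rcases hx with ⟨⟨y, hyS⟩, hyA, rfl⟩ | hxS
      · have hyC : (⟨y, hyS⟩ : S) ∈ (Subtype.val ⁻¹' K : Set S) := hxK
        have := Set.ext_iff.mp hVK ⟨y, hyS⟩
        simp only [Set.mem_inter_iff, Set.mem_preimage] at this
        exact Or.inl (this.mp ⟨hyA, hyC⟩).1
      · have := Set.ext_iff.mp hV₀K x
        simp only [Set.mem_inter_iff, Set.mem_compl_iff] at this
        exact Or.inr (this.mp ⟨hxS, hxK⟩).1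
    · rintro ⟨hx, hxK⟩
      refine ⟨?_, hxK⟩
      by_cases hxS : x ∈ S
      · rcases hx with hxW | hxV₀
        · have hyC : (⟨x, hxS⟩ : S) ∈ (Subtype.val ⁻¹' K : Set S) := hxK
          have := Set.ext_iff.mp hVK ⟨x, hxS⟩
          simp only [Set.mem_inter_iff, Set.mem_preimage] at this
          exact Or.inl ⟨⟨x, hxS⟩, (this.mpr ⟨hxW, hyC⟩).1, rfl⟩
        · have := Set.ext_iff.mp hV₀K x
          simp only [Set.mem_inter_iff, Set.mem_compl_iff] at this
          exact absurd ((this.mpr ⟨hxV₀, hxK⟩).1) (not_not.mpr hxS)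
      · exact Or.inr hxS
  · ext ⟨x, hx⟩
    simp only [Set.mem_preimage, Set.mem_union, Set.mem_image, Set.mem_compl_iff]
    constructor
    · intro h; exact Or.inl ⟨⟨x, hx⟩, h, rfl⟩
    · rintro (⟨⟨y, hy⟩, hyA, h⟩ | h)
      · have hyx : y = x := h
        subst hyx
        exact hyA
      · exact absurd hx h

theorem kelley_tendsto {X : Type*} {t : TopologicalSpace X} {u : ℕ → X} {x : X}
    (h : Tendsto u atTop (@nhds X t x)) : Tendsto u atTop (@nhds X (Kelley t) x) := by
  have hK : @IsCompact X t (insert x (Set.range u)) := by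
    letI := t; exact h.isCompact_insert_range
  have ht : ∀ V : Set X, t.IsOpen V → x ∈ V → ∀ᶠ n in atTop, u n ∈ V := by
    letI := t
    intro V hV hxV
    exact tendsto_nhds.mp h V hV hxV
  letI := Kelley t
  rw [tendsto_nhds]
  intro W hW hxW
  obtain ⟨V, hV, hVK⟩ := hW _ hK
  have hxV : x ∈ V := by
    have := Set.ext_iff.mp hVK x
    simp only [Set.mem_inter_iff] at this
    exact (this.mp ⟨hxW, Set.mem_insert x _⟩).1
  filter_upwards [ht V hV hxV] with n hn
  have hmem : u n ∈ insert x (Set.range u) := Set.mem_insert_of_mem _ ⟨n, rfl⟩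
  have h2 := Set.ext_iff.mp hVK (u n)
  simp only [Set.mem_inter_iff] at h2
  exact (h2.mpr ⟨hn, hmem⟩).1


theorem continuous_comp' {X Y Z : Type*} {tX : TopologicalSpace X} {tY : TopologicalSpace Y}
    {tZ : TopologicalSpace Z} {f : X → Y} {g : Y → Z}
    (hg : Continuous[tY, tZ] g) (hf : Continuous[tX, tY] f) :
    Continuous[tX, tZ] (g ∘ f) := by
  rw [continuous_def] at *
  exact fun U hU => hf _ (hg U hU)

theorem kelley_induced_eq {X : Type*} {t : TopologicalSpace X} {S : Set X}
    (hS : @IsClosed X (Kelley t) S) :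
    Kelley (t.induced (Subtype.val : S → X)) = (Kelley t).induced Subtype.val := by
  apply TopologicalSpace.ext_iff.mpr
  intro A
  constructor
  · intro hA
    obtain ⟨B, hB, rfl⟩ := kelley_induced_of_closed hS A hA
    exact ⟨B, hB, rfl⟩
  · rintro ⟨B, hB, rfl⟩
    have hval : Continuous[t.induced (Subtype.val : S → X), t] Subtype.val :=
      continuous_induced_dom
    have h2 := kelley_continuous hval
    rw [continuous_def] at h2
    exact h2 B hB

theorem t2Space_induced {A B : Type*} {tB : TopologicalSpace B} (h : @T2Space B tB)
    {f : A → B} (hf : Function.Injective f) : @T2Space A (tB.induced f) := by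
  letI := tB
  letI : TopologicalSpace A := tB.induced f
  haveI := h
  exact T2Space.of_injective_continuous hf continuous_induced_dom

/-- A closed vector subspace of a real compactly generated vector space is
again a real compactly generated vector space with the subspace topology and the restricted
linear operations; and if the ambient space is Seip-convenient, so is the subspace. -/
theorem cgvs_closed_submodule {X : Type*} [AddCommGroup X] [Module ℝ X]
    (T : TopologicalSpace X) (hT : IsCGVS T) (S : Submodule ℝ X)
    (hS : @IsClosed X T (S : Set X)) :
    IsCGVS (TopologicalSpace.induced (Subtype.val : S → X) T) ∧
    (IsSeipConvenient T →
      IsSeipConvenient (TopologicalSpace.induced (Subtype.val : S → X) T)) := by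
  obtain ⟨⟨hT2, hCG⟩, hadd, hsmul⟩ := hT
  have hSk : @IsClosed X (Kelley T) (S : Set X) := by rw [hCG]; exact hS
  have hvv : Continuous[@instTopologicalSpaceProd ↥S ↥S
        (TopologicalSpace.induced (Subtype.val : S → X) T)
        (TopologicalSpace.induced (Subtype.val : S → X) T),
      @instTopologicalSpaceProd X X T T] (Prod.map (Subtype.val : S → X) Subtype.val) := by
    letI := T
    exact Continuous.prodMap continuous_induced_dom continuous_induced_dom
  have hrv : Continuous[@instTopologicalSpaceProd ℝ ↥S inferInstance
        (TopologicalSpace.induced (Subtype.val : S → X) T),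
      @instTopologicalSpaceProd ℝ X inferInstance T]
      (Prod.map (id : ℝ → ℝ) (Subtype.val : S → X)) := by
    letI := T
    exact Continuous.prodMap continuous_id continuous_induced_dom
  have hmain : IsCGVS (TopologicalSpace.induced (Subtype.val : S → X) T) := by
    refine ⟨⟨?_, ?_⟩, ?_, ?_⟩
    · exact t2Space_induced hT2 Subtype.val_injective
    · have h := kelley_induced_eq (t := T) (S := (S : Set X)) hSk
      rw [hCG] at h
      exact h
    · have h1 : Continuous[Kelley (@instTopologicalSpaceProd ↥S ↥S
            (TopologicalSpace.induced (Subtype.val : S → X) T)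
            (TopologicalSpace.induced (Subtype.val : S → X) T)), T]
          ((fun p : X × X => p.1 + p.2) ∘ (Prod.map (Subtype.val : S → X) Subtype.val)) :=
        continuous_comp' hadd (kelley_continuous hvv)
      exact continuous_induced_rng.mpr h1
    · have h1 : Continuous[Kelley (@instTopologicalSpaceProd ℝ ↥S inferInstance
            (TopologicalSpace.induced (Subtype.val : S → X) T)), T]
          ((fun p : ℝ × X => p.1 • p.2) ∘ (Prod.map (id : ℝ → ℝ) (Subtype.val : S → X))) :=
        continuous_comp' hsmul (kelley_continuous hrv)
      exact continuous_induced_rng.mpr h1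
  refine ⟨hmain, ?_⟩
  rintro ⟨-, U, hTAG, hCS, hLC, hT2U, hSC, hTU⟩
  have hSkU : @IsClosed X (Kelley U) (S : Set X) := by rw [← hTU]; exact hS
  refine ⟨hmain, TopologicalSpace.induced (Subtype.val : S → X) U, ?_, ?_, ?_, ?_, ?_, ?_⟩
  · letI := U
    haveI := hTAG
    exact topologicalAddGroup_induced S.subtype
  · letI := U
    haveI := hCS
    exact continuousSMul_induced S.subtype
  · letI := U
    haveI := hTAG
    haveI := hCS
    haveI := hLC
    exact LocallyConvexSpace.induced (𝕜 := ℝ) (E := ↥S) (F := X) S.subtype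
  · exact t2Space_induced hT2U Subtype.val_injective
  · intro u hu
    have hcauchy : ∀ V ∈ @nhds X U 0, ∃ N : ℕ, ∀ m ≥ N, ∀ n ≥ N,
        ((u m : X) - (u n : X)) ∈ V := by
      intro V hV
      have h0 : ((0 : ↥S) : X) = 0 := rfl
      have hmem : (Subtype.val ⁻¹' V : Set ↥S) ∈
          @nhds ↥S (TopologicalSpace.induced (Subtype.val : S → X) U) 0 := by
        rw [nhds_induced]
        exact preimage_mem_comap (by rw [h0]; exact hV)
      obtain ⟨N, hN⟩ := hu _ hmem
      exact ⟨N, fun m hm n hn => by simpa using hN m hm n hn⟩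
    obtain ⟨x, hx⟩ := hSC (fun n => ((u n : X))) hcauchy
    have hxS : x ∈ S := by
      letI := T
      have hxT : Tendsto (fun n => ((u n : X))) atTop (@nhds X T x) := by
        rw [hTU]
        exact kelley_tendsto hx
      exact hS.mem_of_tendsto hxT (Filter.Eventually.of_forall fun n => (u n).2)
    refine ⟨⟨x, hxS⟩, ?_⟩
    rw [nhds_induced]
    exact tendsto_comap_iff.mpr hx
  · have h := kelley_induced_eq (t := U) (S := (S : Set X)) hSkU
    rw [← hTU] at h
    exact h.symm
end

section
/- Let (X, T) be a Hausdorff topological space and (Y, U) any topological space, let C(X,Y) be the set of continuous maps X → Y with the compact-open topology F, and let W = k(T × F) be the Kelleyfication of the product topology on X × C(X,Y). Then the evaluation map ev : X × C(X,Y) → Y, (x, f) ↦ f(x), is continuous from W to U. -/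
open Set Filter Topology

/-- For a Hausdorff space `X` and any space `Y`, the evaluation map
`X × C(X,Y) → Y` is continuous from the Kelleyfication of the product of the topology of `X`
with the compact-open topology. -/
theorem eval_continuous_kelley {X Y : Type*} [tX : TopologicalSpace X]
    [tY : TopologicalSpace Y] [T2Space X] :
    Continuous[Kelley (@instTopologicalSpaceProd X C(X, Y) tX ContinuousMap.compactOpen), tY]
      (fun p : X × C(X, Y) => p.2 p.1) := by
  rw [continuous_def]
  intro V hV
  show ∀ K : Set (X × C(X, Y)), IsCompact K → _
  intro K hK
  -- the evaluation restricted to `K` is continuous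
  have hcont : Continuous fun p : K => (p : X × C(X, Y)).2 (p : X × C(X, Y)).1 := by
    set K1 : Set X := Prod.fst '' K with hK1def
    have hK1 : IsCompact K1 := hK.image continuous_fst
    haveI : CompactSpace K1 := isCompact_iff_compactSpace.mp hK1
    let ι : C(K1, X) := ⟨Subtype.val, continuous_subtype_val⟩
    have he : Continuous fun q : K1 × C(X, Y) => q.2 q.1.1 := by
      have h1 : Continuous fun q : K1 × C(X, Y) => ((q.2.comp ι) q.1 : Y) :=
        continuous_eval.comp
          (((ContinuousMap.continuous_precomp ι).comp continuous_snd).prodMk continuous_fst)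
      exact h1
    have hg : Continuous fun p : K => ((⟨(p : X × C(X, Y)).1, ⟨p.1, p.2, rfl⟩⟩ : K1),
        (p : X × C(X, Y)).2) :=
      (Continuous.subtype_mk (continuous_fst.comp continuous_subtype_val) _).prodMk
        (continuous_snd.comp continuous_subtype_val)
    exact he.comp hg
  have hopen : IsOpen
      ((Subtype.val : K → X × C(X, Y)) ⁻¹' ((fun p : X × C(X, Y) => p.2 p.1) ⁻¹' V)) :=
    hcont.isOpen_preimage V hV
  rw [isOpen_induced_iff] at hopen
  obtain ⟨W, hW, hWeq⟩ := hopen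
  refine ⟨W, hW, ?_⟩
  ext p
  simp only [Set.mem_inter_iff, Set.mem_preimage]
  constructor
  · rintro ⟨hpV, hpK⟩
    exact ⟨(Set.ext_iff.mp hWeq ⟨p, hpK⟩).mpr hpV, hpK⟩
  · rintro ⟨hpW, hpK⟩
    exact ⟨(Set.ext_iff.mp hWeq ⟨p, hpK⟩).mp hpW, hpK⟩
end

section
/- Let (Ω, 𝒰), (T, 𝒯), (T₁, 𝒯₁) be topological spaces such that 𝒰 equals its own Kelleyfication (k𝒰 = 𝒰) and 𝒯 is locally compact, and let f : Ω × T → T₁ be a function defined on all of Ω × T. If for every 𝒰-compact set K ⊆ Ω the restriction of f to K × T is continuous with respect to the (subspace of the) product topology 𝒰 × 𝒯 and 𝒯₁, then f itself is continuous from the product topology 𝒰 × 𝒯 to 𝒯₁. -/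
open Set Filter Topology

/-- If `𝒰` equals its Kelleyfication, `𝒯` is locally compact, and
`f : Ω × T → T₁` is continuous on `K × T` for every `𝒰`-compact `K`, then `f` is continuous
on all of `Ω × T` for the product topology. -/
theorem continuous_of_continuous_on_compacts {Ω T T₁ : Type*} [u : TopologicalSpace Ω]
    [t : TopologicalSpace T] [t₁ : TopologicalSpace T₁]
    (hu : Kelley u = u) (ht : LocCompact t) (f : Ω × T → T₁)
    (h : ∀ K : Set Ω, IsCompact K → Continuous fun p : K × T => f (p.1.1, p.2)) :
    Continuous f := by
  rw [continuous_def]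
  intro W hW
  rw [isOpen_prod_iff]
  intro ω₀ τ₀ hmem
  -- continuity of f(ω₀, ·)
  have hcont0 : Continuous fun τ : T => f (ω₀, τ) := by
    have := (h {ω₀} isCompact_singleton).comp
      (continuous_const.prodMk continuous_id : Continuous fun τ : T =>
        ((⟨ω₀, rfl⟩ : ({ω₀} : Set Ω)), τ))
    exact this
  have hO : IsOpen {τ : T | f (ω₀, τ) ∈ W} := hW.preimage hcont0
  obtain ⟨L, V, hτV, hVopen, hVL, hLO, hLcomp⟩ := ht τ₀ _ hO hmem
  set M : Set Ω := {ω | ∀ τ ∈ L, f (ω, τ) ∈ W} with hM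
  have hMopen : IsOpen M := by
    rw [← hu]
    intro K hK
    have hg := h K hK
    have hopen : IsOpen {p : K × T | f (p.1.1, p.2) ∈ W} := hW.preimage hg
    have hN : IsOpen {k : K | ∀ τ ∈ L, f (k.1, τ) ∈ W} := by
      rw [isOpen_iff_forall_mem_open]
      intro k hk
      have hsub : ({k} : Set K) ×ˢ L ⊆ {p : K × T | f (p.1.1, p.2) ∈ W} := by
        rintro ⟨k', τ⟩ ⟨hk', hτ⟩
        simp only [mem_singleton_iff] at hk'
        subst hk'
        exact hk τ hτ
      obtain ⟨A, B, hA, hB, hkA, hLB, hAB⟩ :=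
        generalized_tube_lemma isCompact_singleton hLcomp hopen hsub
      refine ⟨A, fun a ha τ hτ => hAB (⟨ha, hLB hτ⟩ : (a, τ) ∈ A ×ˢ B), hA,
        hkA rfl⟩
    obtain ⟨S, hS, hSN⟩ := isOpen_induced_iff.mp hN
    refine ⟨S, hS, ?_⟩
    ext x
    simp only [mem_inter_iff]
    constructor
    · rintro ⟨hxM, hxK⟩
      have : (⟨x, hxK⟩ : K) ∈ {k : K | ∀ τ ∈ L, f (k.1, τ) ∈ W} := hxM
      rw [← hSN] at this
      exact ⟨this, hxK⟩
    · rintro ⟨hxS, hxK⟩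
      have : (⟨x, hxK⟩ : K) ∈ Subtype.val ⁻¹' S := hxS
      rw [hSN] at this
      exact ⟨this, hxK⟩
  refine ⟨M, V, hMopen, hVopen, fun τ hτ => hLO hτ, hτV, ?_⟩
  rintro ⟨ω, τ⟩ ⟨hω, hτ⟩
  exact hω τ (hVL hτ)
end

section
/- If T and U are topologies of which one is compactly generated (Hausdorff with T = kT) and the other is locally compact, then the Kelleyfication of the product topology T × U equals the product topology T × U itself; that is, the product topology is almost compactly generated. -/
open Set Filter Topology

lemma locCompact_kelley {Y : Type*} (U : TopologicalSpace Y) (h : LocCompact U) :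
    Kelley U = U := by
  refine le_antisymm (kelley_le U) ?_
  rw [TopologicalSpace.le_def]
  intro W hW
  letI := U
  rw [isOpen_iff_forall_mem_open]
  intro y hy
  obtain ⟨K, V, hyV, hVo, hVK, _, hKc⟩ := h y univ isOpen_univ (mem_univ y)
  obtain ⟨V', hV'o, hV'W⟩ := hW K hKc
  refine ⟨V ∩ V', fun z hz => ?_, IsOpen.inter (show IsOpen V from hVo) (show IsOpen V' from hV'o), hyV, ?_⟩
  · have : z ∈ V' ∩ K := ⟨hz.2, hVK hz.1⟩
    rw [← hV'W] at this
    exact this.1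
  · have : y ∈ W ∩ K := ⟨hy, hVK hyV⟩
    rw [hV'W] at this
    exact this.1

lemma core {X Y : Type*} (T : TopologicalSpace X) (U : TopologicalSpace Y)
    (hT : Kelley T = T) (hU : LocCompact U) :
    Kelley (@instTopologicalSpaceProd X Y T U) = @instTopologicalSpaceProd X Y T U := by
  letI := T; letI := U
  refine le_antisymm (kelley_le _) ?_
  rw [TopologicalSpace.le_def]
  intro W hW
  rw [isOpen_iff_forall_mem_open]
  rintro ⟨x₀, y₀⟩ hxy
  -- slice at x₀ is U-open
  have hS' : (Kelley U).IsOpen {y : Y | (x₀, y) ∈ W} := by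
    intro K hK
    obtain ⟨V, hV, hVW⟩ := hW ({x₀} ×ˢ K) (isCompact_singleton.prod hK)
    refine ⟨{y | (x₀, y) ∈ V}, (show IsOpen V from hV).preimage (Continuous.prodMk_right x₀), ?_⟩
    ext y
    simp only [mem_inter_iff, mem_setOf_eq]
    constructor
    · rintro ⟨h1, h2⟩
      have : (x₀, y) ∈ V ∩ ({x₀} ×ˢ K) := by
        rw [← hVW]; exact ⟨h1, rfl, h2⟩
      exact ⟨this.1, h2⟩
    · rintro ⟨h1, h2⟩
      have : (x₀, y) ∈ W ∩ ({x₀} ×ˢ K) := by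
        rw [hVW]; exact ⟨h1, rfl, h2⟩
      exact ⟨this.1, h2⟩
  rw [locCompact_kelley U hU] at hS'
  have hS : IsOpen {y : Y | (x₀, y) ∈ W} := hS'
  obtain ⟨L, U₀, hyU₀, hU₀o, hU₀L, hLS, hLc⟩ := hU y₀ _ hS hxy
  have hA' : (Kelley T).IsOpen {x : X | ∀ y ∈ L, (x, y) ∈ W} := by
    intro K hK
    obtain ⟨V, hV, hVW⟩ := hW (K ×ˢ L) (hK.prod hLc)
    refine ⟨{x | ∀ y ∈ L, (x, y) ∈ V}, ?_, ?_⟩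
    · show IsOpen {x | ∀ y ∈ L, (x, y) ∈ V}
      rw [isOpen_iff_forall_mem_open]
      intro x hx
      obtain ⟨u, v, hu, _, hxu, hLv, huv⟩ := generalized_tube_lemma isCompact_singleton hLc (show IsOpen V from hV)
        (by rintro ⟨a, b⟩ ⟨ha, hb⟩; rw [mem_singleton_iff] at ha; subst ha; exact hx b hb)
      exact ⟨u, fun x' hx' y hy => huv ⟨hx', hLv hy⟩, hu, hxu rfl⟩
    · ext x
      simp only [mem_inter_iff, mem_setOf_eq]
      constructor
      · rintro ⟨h1, h2⟩
        refine ⟨fun y hy => ?_, h2⟩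
        have : (x, y) ∈ W ∩ (K ×ˢ L) := ⟨h1 y hy, h2, hy⟩
        rw [hVW] at this
        exact this.1
      · rintro ⟨h1, h2⟩
        refine ⟨fun y hy => ?_, h2⟩
        have : (x, y) ∈ V ∩ (K ×ˢ L) := ⟨h1 y hy, h2, hy⟩
        rw [← hVW] at this
        exact this.1
  rw [hT] at hA'
  have hAopen : IsOpen {x : X | ∀ y ∈ L, (x, y) ∈ W} := hA'
  refine ⟨{x : X | ∀ y ∈ L, (x, y) ∈ W} ×ˢ U₀, ?_, hAopen.prod (show IsOpen U₀ from hU₀o),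
    fun y hy => hLS hy, hyU₀⟩
  rintro ⟨x, y⟩ ⟨hx, hy⟩
  exact hx y (hU₀L hy)

lemma core' {X Y : Type*} (T : TopologicalSpace X) (U : TopologicalSpace Y)
    (hT : LocCompact T) (hU : Kelley U = U) :
    Kelley (@instTopologicalSpaceProd X Y T U) = @instTopologicalSpaceProd X Y T U := by
  letI := T; letI := U
  refine le_antisymm (kelley_le _) ?_
  rw [TopologicalSpace.le_def]
  intro W hW
  rw [isOpen_iff_forall_mem_open]
  rintro ⟨x₀, y₀⟩ hxy
  have hS' : (Kelley T).IsOpen {x : X | (x, y₀) ∈ W} := by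
    intro K hK
    obtain ⟨V, hV, hVW⟩ := hW (K ×ˢ {y₀}) (hK.prod isCompact_singleton)
    refine ⟨{x | (x, y₀) ∈ V}, (show IsOpen V from hV).preimage (continuous_id.prodMk continuous_const), ?_⟩
    ext x
    simp only [mem_inter_iff, mem_setOf_eq]
    constructor
    · rintro ⟨h1, h2⟩
      have : (x, y₀) ∈ V ∩ (K ×ˢ {y₀}) := by
        rw [← hVW]; exact ⟨h1, h2, rfl⟩
      exact ⟨this.1, h2⟩
    · rintro ⟨h1, h2⟩
      have : (x, y₀) ∈ W ∩ (K ×ˢ {y₀}) := by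
        rw [hVW]; exact ⟨h1, h2, rfl⟩
      exact ⟨this.1, h2⟩
  rw [locCompact_kelley T hT] at hS'
  have hS : IsOpen {x : X | (x, y₀) ∈ W} := hS'
  obtain ⟨L, U₀, hxU₀, hU₀o, hU₀L, hLS, hLc⟩ := hT x₀ _ hS hxy
  have hA' : (Kelley U).IsOpen {y : Y | ∀ x ∈ L, (x, y) ∈ W} := by
    intro K hK
    obtain ⟨V, hV, hVW⟩ := hW (L ×ˢ K) (hLc.prod hK)
    refine ⟨{y | ∀ x ∈ L, (x, y) ∈ V}, ?_, ?_⟩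
    · show IsOpen {y | ∀ x ∈ L, (x, y) ∈ V}
      rw [isOpen_iff_forall_mem_open]
      intro y hy
      obtain ⟨u, v, _, hv, hLu, hyv, huv⟩ := generalized_tube_lemma hLc isCompact_singleton (show IsOpen V from hV)
        (by rintro ⟨a, b⟩ ⟨ha, hb⟩; rw [mem_singleton_iff] at hb; subst hb; exact hy a ha)
      exact ⟨v, fun y' hy' x hx => huv ⟨hLu hx, hy'⟩, hv, hyv rfl⟩
    · ext y
      simp only [mem_inter_iff, mem_setOf_eq]
      constructor
      · rintro ⟨h1, h2⟩
        refine ⟨fun x hx => ?_, h2⟩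
        have : (x, y) ∈ W ∩ (L ×ˢ K) := ⟨h1 x hx, hx, h2⟩
        rw [hVW] at this
        exact this.1
      · rintro ⟨h1, h2⟩
        refine ⟨fun x hx => ?_, h2⟩
        have : (x, y) ∈ V ∩ (L ×ˢ K) := ⟨h1 x hx, hx, h2⟩
        rw [← hVW] at this
        exact this.1
  rw [hU] at hA'
  have hAopen : IsOpen {y : Y | ∀ x ∈ L, (x, y) ∈ W} := hA'
  refine ⟨U₀ ×ˢ {y : Y | ∀ x ∈ L, (x, y) ∈ W}, ?_, (show IsOpen U₀ from hU₀o).prod hAopen,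
    hxU₀, fun x hx => hLS hx⟩
  rintro ⟨x, y⟩ ⟨hx, hy⟩
  exact hy x (hU₀L hx)

/-- If one of the topologies `T`, `U` is compactly generated and the other is
locally compact, then their product topology equals its own Kelleyfication, i.e. it is
almost compactly generated. -/
theorem kelley_prod_of_cg_locCompact {X Y : Type*} (T : TopologicalSpace X)
    (U : TopologicalSpace Y)
    (h : (IsCG T ∧ LocCompact U) ∨ (LocCompact T ∧ IsCG U)) :
    Kelley (@instTopologicalSpaceProd X Y T U) = @instTopologicalSpaceProd X Y T U := by
  rcases h with ⟨hT, hU⟩ | ⟨hT, hU⟩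
  · exact core T U hT.2 hU
  · exact core' T U hT hU.2
end

section
/- Let E, F, G be real compactly generated vector spaces with topologies τE, τF, τG, let U be τE-open, and let f₁ be a function assigning to each x ∈ U a linear map f₁(x) : F → G. Define f₁^∧ : U × F → G by (x, v) ↦ f₁(x)(v). Then f₁^∧ is continuous from the Kelleyfication k(τE × τF) of the product topology to τG if and only if each f₁(x) is a continuous linear map F → G and f₁ is continuous from τE into L_cg(F,G), the set of continuous linear maps F → G endowed with the Kelleyfication of the subspace topology induced by the compact-open topology on C(F,G). -/
open Set Filter Topology

lemma kelley_isOpen_of_isOpen_s10 {X : Type*} {T : TopologicalSpace X} {V : Set X}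
    (hV : T.IsOpen V) : (Kelley T).IsOpen V :=
  fun _K _ => ⟨V, hV, rfl⟩

/-- A continuous map from a CG space is continuous into the Kelleyfication of the target. -/
lemma continuous_kelley_rng {X Y : Type*} {tX : TopologicalSpace X} {tY : TopologicalSpace Y}
    (hX : ∀ W : Set X, (Kelley tX).IsOpen W → tX.IsOpen W)
    {f : X → Y} (hf : Continuous[tX, tY] f) : Continuous[tX, Kelley tY] f := by
  rw [continuous_def]
  intro W hW
  apply hX
  intro K hK
  obtain ⟨V, hV, hVK⟩ := hW (f '' K) (@IsCompact.image _ _ tX tY _ _ hK hf)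
  refine ⟨f ⁻¹' V, hf.isOpen_preimage V hV, ?_⟩
  ext x
  simp only [mem_inter_iff, mem_preimage]
  constructor
  · rintro ⟨hxW, hxK⟩
    have : f x ∈ V ∩ (f '' K) := hVK ▸ (⟨hxW, mem_image_of_mem f hxK⟩ : f x ∈ W ∩ (f '' K))
    exact ⟨this.1, hxK⟩
  · rintro ⟨hxV, hxK⟩
    have : f x ∈ W ∩ (f '' K) := hVK ▸ (⟨hxV, mem_image_of_mem f hxK⟩ : f x ∈ V ∩ (f '' K))
    exact ⟨this.1, hxK⟩

/-- Glue local open witnesses into one open set with the same trace. -/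
lemma exists_open_inter_eq {X : Type*} [TopologicalSpace X] {S L : Set X}
    (key : ∀ x ∈ S ∩ L, ∃ O : Set X, IsOpen O ∧ x ∈ O ∧ O ∩ L ⊆ S) :
    ∃ V : Set X, IsOpen V ∧ S ∩ L = V ∩ L := by
  choose O hOopen hOx hOsub using key
  refine ⟨⋃ (x : X) (h : x ∈ S ∩ L), O x h, isOpen_iUnion fun x => isOpen_iUnion fun h => hOopen x h, ?_⟩
  ext y
  simp only [mem_inter_iff, mem_iUnion]
  constructor
  · rintro ⟨hyS, hyL⟩
    exact ⟨⟨y, ⟨hyS, hyL⟩, hOx y ⟨hyS, hyL⟩⟩, hyL⟩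
  · rintro ⟨⟨x, h, hyO⟩, hyL⟩
    exact ⟨hOsub x h ⟨hyO, hyL⟩, hyL⟩

/-- An open subspace of a compactly generated Hausdorff space is compactly generated. -/
lemma kelley_subtype_of_open {X : Type*} [T : TopologicalSpace X] [T2Space X]
    (hk : Kelley T = T) {U : Set X} (hU : IsOpen U) :
    ∀ W : Set U, (Kelley (instTopologicalSpaceSubtype : TopologicalSpace U)).IsOpen W → IsOpen W := by
  intro W hW
  have hS : IsOpen (Subtype.val '' W) := by
    rw [← hk]
    intro L hL
    apply exists_open_inter_eq
    rintro x ⟨hxW, hxL⟩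
    have hxU : x ∈ U := by rcases hxW with ⟨x', _, rfl⟩; exact x'.2
    haveI : CompactSpace L := isCompact_iff_compactSpace.mp hL
    have hUL : IsOpen ((Subtype.val : L → X) ⁻¹' U) := hU.preimage continuous_subtype_val
    obtain ⟨K', hK'c, hxint, hK'U⟩ :=
      exists_compact_subset hUL (show (⟨x, hxL⟩ : L) ∈ _ from hxU)
    have hKc : IsCompact (Subtype.val '' K') := hK'c.image continuous_subtype_val
    have hKU : Subtype.val '' K' ⊆ U := by
      rintro _ ⟨y, hy, rfl⟩; exact hK'U hy
    have hK0 : IsCompact ((Subtype.val : U → X) ⁻¹' (Subtype.val '' K')) := by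
      rw [Subtype.isCompact_iff, Set.image_preimage_eq_inter_range, Subtype.range_val,
        inter_eq_self_of_subset_left hKU]
      exact hKc
    obtain ⟨V₀, hV₀, hWK⟩ := hW _ hK0
    obtain ⟨V₁, hV₁, rfl⟩ := isOpen_induced_iff.mp (show IsOpen V₀ from hV₀)
    obtain ⟨O₂, hO₂, hintEq⟩ := isOpen_induced_iff.mp (isOpen_interior (s := K'))
    have hxK : x ∈ Subtype.val '' K' := ⟨⟨x, hxL⟩, interior_subset hxint, rfl⟩
    have hxV₁ : x ∈ V₁ := by
      rcases hxW with ⟨x', hx'W, rfl⟩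
      have hmem : x' ∈ W ∩ (Subtype.val ⁻¹' (Subtype.val '' K')) := ⟨hx'W, hxK⟩
      rw [hWK] at hmem
      exact hmem.1
    refine ⟨O₂ ∩ (V₁ ∩ U), hO₂.inter (hV₁.inter hU), ⟨?_, hxV₁, hxU⟩, ?_⟩
    · have := hxint; rw [← hintEq] at this; exact this
    · rintro y ⟨⟨hyO₂, hyV₁, hyU⟩, hyL⟩
      have hyK' : (⟨y, hyL⟩ : L) ∈ K' := interior_subset (by rw [← hintEq]; exact hyO₂)
      have hyK : y ∈ Subtype.val '' K' := ⟨⟨y, hyL⟩, hyK', rfl⟩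
      have hmem : (⟨y, hyU⟩ : U) ∈ (Subtype.val ⁻¹' V₁) ∩ (Subtype.val ⁻¹' (Subtype.val '' K')) :=
        ⟨hyV₁, hyK⟩
      rw [← hWK] at hmem
      exact ⟨⟨y, hyU⟩, hmem.1, rfl⟩
  have : W = Subtype.val ⁻¹' (Subtype.val '' W) := (preimage_image_eq W Subtype.val_injective).symm
  rw [this]
  exact hS.preimage continuous_subtype_val

/-- For real compactly generated vector spaces `E`, `F`, `G`, an open `U ⊆ E`
and a family `f₁` of linear maps `F → G` indexed by `U`, the uncurried map
`(x,v) ↦ f₁ x v` is continuous from the Kelleyfication of the product topology to `G` iff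
each `f₁ x` is continuous and `f₁` is continuous into `L_cg(F,G)`, the continuous linear
maps with the Kelleyfication of the subspace topology of the compact-open topology. -/
theorem uncurry_continuous_iff_into_Lcg {E F G : Type*}
    [AddCommGroup E] [Module ℝ E] [AddCommGroup F] [Module ℝ F] [AddCommGroup G] [Module ℝ G]
    [tE : TopologicalSpace E] [tF : TopologicalSpace F] [tG : TopologicalSpace G]
    (hE : IsCGVS tE) (hF : IsCGVS tF) (hG : IsCGVS tG)
    (U : Set E) (hU : IsOpen U) (f₁ : U → F →ₗ[ℝ] G) :
    Continuous[Kelley (inferInstance : TopologicalSpace (↥U × F)), tG]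
      (fun p : ↥U × F => f₁ p.1 p.2) ↔
    ∃ hc : ∀ x : U, Continuous ⇑(f₁ x),
      Continuous[inferInstance,
          Kelley (TopologicalSpace.induced Subtype.val
            (ContinuousMap.compactOpen : TopologicalSpace C(F, G)))]
        (fun x : U => (⟨⟨⇑(f₁ x), hc x⟩,
          ⟨fun a b => (f₁ x).map_add a b, fun c y => (f₁ x).map_smul c y⟩⟩ :
            {g : C(F, G) // IsLinearMap ℝ ⇑g})) := by
  haveI hT2E : T2Space E := hE.1.1
  haveI hT2F : T2Space F := hF.1.1
  have hkU : ∀ W : Set U, (Kelley (instTopologicalSpaceSubtype : TopologicalSpace U)).IsOpen W →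
      IsOpen W := kelley_subtype_of_open hE.1.2 hU
  constructor
  · intro h
    have hc : ∀ x : U, Continuous ⇑(f₁ x) := by
      intro x
      have hι : Continuous (fun v : F => ((x, v) : U × F)) :=
        (continuous_const (y := x)).prodMk continuous_id
      have hι' : Continuous[tF, Kelley (inferInstance : TopologicalSpace (↥U × F))]
          (fun v : F => ((x, v) : U × F)) :=
        continuous_kelley_rng (fun W hW => by rw [← hF.1.2]; exact hW) hι
      exact @Continuous.comp F (↥U × F) G tF (Kelley inferInstance) tG
        _ (fun p : ↥U × F => f₁ p.1 p.2) h hι'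
    refine ⟨hc, ?_⟩
    apply continuous_kelley_rng hkU
    refine continuous_induced_rng.mpr ?_
    show Continuous (fun x : U => (⟨⇑(f₁ x), hc x⟩ : C(F, G)))
    rw [ContinuousMap.continuous_compactOpen]
    intro K hK V hV
    apply hkU
    intro L hL
    obtain ⟨V', hV', hVK⟩ := (continuous_def.mp h) V hV (L ×ˢ K) (hL.prod hK)
    apply exists_open_inter_eq
    rintro x ⟨hxM, hxL⟩
    have hsub : ({x} : Set U) ×ˢ K ⊆ V' := by
      rintro ⟨a, b⟩ ⟨ha, hb⟩
      rcases ha with rfl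
      have : (a, b) ∈ (fun p : ↥U × F => f₁ p.1 p.2) ⁻¹' V ∩ L ×ˢ K :=
        ⟨hxM hb, hxL, hb⟩
      rw [hVK] at this
      exact this.1
    obtain ⟨u, w, hu, hw, hxu, hKw, huw⟩ :=
      generalized_tube_lemma isCompact_singleton hK hV' hsub
    refine ⟨u, hu, hxu rfl, ?_⟩
    rintro y ⟨hyu, hyL⟩ v hv
    have : (y, v) ∈ V' ∩ L ×ˢ K := ⟨huw ⟨hyu, hKw hv⟩, hyL, hv⟩
    rw [← hVK] at this
    exact this.1
  · rintro ⟨hc, hcont⟩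
    rw [continuous_def]
    intro V hV
    intro C hC
    have hK : IsCompact (Prod.snd '' C) := hC.image continuous_snd
    apply exists_open_inter_eq
    rintro ⟨x₀, v₀⟩ ⟨hpV, hpC⟩
    set K := Prod.snd '' C with hKdef
    have hv₀K : v₀ ∈ K := ⟨(x₀, v₀), hpC, rfl⟩
    haveI : CompactSpace K := isCompact_iff_compactSpace.mp hK
    have hfV : IsOpen ((⇑(f₁ x₀)) ⁻¹' V) := (hc x₀).isOpen_preimage V hV
    have hpre : IsOpen ((Subtype.val : K → F) ⁻¹' ((⇑(f₁ x₀)) ⁻¹' V)) :=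
      hfV.preimage continuous_subtype_val
    obtain ⟨K'c, hK'c, hint, hK'sub⟩ :=
      exists_compact_subset hpre (show (⟨v₀, hv₀K⟩ : K) ∈ _ from hpV)
    have hK'cpt : IsCompact (Subtype.val '' K'c) := hK'c.image continuous_subtype_val
    have hK'V : MapsTo (⇑(f₁ x₀)) (Subtype.val '' K'c) V := by
      rintro _ ⟨y, hy, rfl⟩; exact hK'sub hy
    obtain ⟨O₂, hO₂, hintEq⟩ := isOpen_induced_iff.mp (isOpen_interior (s := K'c))
    have hS₁ : (ContinuousMap.compactOpen : TopologicalSpace C(F, G)).IsOpen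
        {h : C(F, G) | MapsTo ⇑h (Subtype.val '' K'c) V} :=
      ContinuousMap.isOpen_setOf_mapsTo hK'cpt hV
    have hS₂ : (TopologicalSpace.induced (Subtype.val : {g : C(F, G) // IsLinearMap ℝ ⇑g} → C(F, G))
        ContinuousMap.compactOpen).IsOpen
        (Subtype.val ⁻¹' {h : C(F, G) | MapsTo ⇑h (Subtype.val '' K'c) V}) :=
      ⟨_, hS₁, rfl⟩
    have hNopen : IsOpen {x : U | MapsTo (⇑(f₁ x)) (Subtype.val '' K'c) V} := by
      have := (continuous_def.mp hcont) _ (kelley_isOpen_of_isOpen_s10 hS₂)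
      exact this
    refine ⟨{x : U | MapsTo (⇑(f₁ x)) (Subtype.val '' K'c) V} ×ˢ O₂,
      hNopen.prod hO₂, ⟨hK'V, ?_⟩, ?_⟩
    · have := hint; rw [← hintEq] at this; exact this
    · rintro ⟨x, v⟩ ⟨⟨hxN, hvO₂⟩, hxvC⟩
      have hvK : v ∈ K := ⟨(x, v), hxvC, rfl⟩
      have hvK' : (⟨v, hvK⟩ : K) ∈ K'c := interior_subset (by rw [← hintEq]; exact hvO₂)
      exact hxN ⟨⟨v, hvK⟩, hvK', rfl⟩
end

section
/- Let E be a real vector space equipped with an almost compactly generated topology τE (that is, τE equals its Kelleyfication), and let F₁ be a sequentially complete Hausdorff real locally convex topological vector space. Then the vector space of continuous linear maps E → F₁, endowed with the (locally convex) topology of uniform convergence on τE-compact subsets of E, is sequentially complete. -/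
open Set Filter Topology

/-- If `E` carries an almost compactly generated topology and `F₁` is a
sequentially complete Hausdorff real locally convex topological vector space, then the space
of continuous linear maps `E → F₁` with the topology of uniform convergence on compact sets
is sequentially complete: every sequence of continuous linear maps that is Cauchy uniformly
on every compact set converges, uniformly on every compact set, to a continuous linear map. -/
theorem clm_compact_convergence_seqComplete {E F₁ : Type*}
    [AddCommGroup E] [Module ℝ E] [tE : TopologicalSpace E]
    [AddCommGroup F₁] [Module ℝ F₁] [t : TopologicalSpace F₁]
    [IsTopologicalAddGroup F₁] [ContinuousSMul ℝ F₁] [LocallyConvexSpace ℝ F₁] [T2Space F₁]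
    (hE : Kelley tE = tE) (hF : SeqComplete t)
    (u : ℕ → E →L[ℝ] F₁)
    (hu : ∀ K : Set E, IsCompact K → ∀ V ∈ nhds (0 : F₁), ∃ N : ℕ, ∀ m ≥ N, ∀ n ≥ N,
      ∀ x ∈ K, u m x - u n x ∈ V) :
    ∃ ℓ : E →L[ℝ] F₁, ∀ K : Set E, IsCompact K → ∀ V ∈ nhds (0 : F₁),
      ∀ᶠ n in Filter.atTop, ∀ x ∈ K, u n x - ℓ x ∈ V := by
  classical
  letI : UniformSpace F₁ := IsTopologicalAddGroup.rightUniformSpace F₁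
  haveI : IsUniformAddGroup F₁ := isUniformAddGroup_of_addCommGroup
  -- pointwise limits exist
  have hptw : ∀ x : E, ∃ y : F₁, Tendsto (fun n => u n x) atTop (nhds y) := by
    intro x
    apply hF
    intro V hV
    obtain ⟨N, hN⟩ := hu {x} isCompact_singleton V hV
    exact ⟨N, fun m hm n hn => hN m hm n hn x rfl⟩
  choose f hf using hptw
  have hadd : ∀ x y, f (x + y) = f x + f y := by
    intro x y
    refine tendsto_nhds_unique ?_ ((hf x).add (hf y))
    simpa [map_add] using hf (x + y)
  have hsmul : ∀ (c : ℝ) (x : E), f (c • x) = c • f x := by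
    intro c x
    refine tendsto_nhds_unique ?_ ((hf x).const_smul c)
    simpa [map_smul] using hf (c • x)
  -- uniform convergence on compact sets
  have hconv : ∀ K : Set E, IsCompact K → ∀ V ∈ nhds (0 : F₁),
      ∃ N : ℕ, ∀ n ≥ N, ∀ x ∈ K, u n x - f x ∈ V := by
    intro K hK V hV
    have hVneg : (fun y : F₁ => -y) ⁻¹' V ∈ nhds (0 : F₁) :=
      (continuous_neg.continuousAt (x := (0 : F₁))).preimage_mem_nhds (by simpa using hV)
    have hV' : V ∩ ((fun y : F₁ => -y) ⁻¹' V) ∈ nhds (0 : F₁) := Filter.inter_mem hV hVneg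
    obtain ⟨W, hW0, hWc, hWsub⟩ := exists_mem_nhds_isClosed_subset hV'
    obtain ⟨N, hN⟩ := hu K hK W hW0
    refine ⟨N, fun n hn x hx => ?_⟩
    have htend : Tendsto (fun m => u m x - u n x) atTop (nhds (f x - u n x)) :=
      (hf x).sub tendsto_const_nhds
    have hmem : f x - u n x ∈ W :=
      hWc.mem_of_tendsto htend (eventually_atTop.2 ⟨N, fun m hm => hN m hm n hn x hx⟩)
    have h2 := (hWsub hmem).2
    simpa [neg_sub] using h2
  -- continuity of the limit
  have hcont : Continuous f := by
    rw [← hE, continuous_def]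
    intro U hU
    intro K hK
    -- f is continuous on K thanks to uniform convergence
    have htu : TendstoUniformlyOn (fun n x => u n x) f atTop K := by
      intro S hS
      rw [uniformity_eq_comap_nhds_zero] at hS
      obtain ⟨V, hV, hVS⟩ := hS
      obtain ⟨N, hN⟩ := hconv K hK V hV
      filter_upwards [eventually_ge_atTop N] with n hn x hx
      exact hVS (by simpa using hN n hn x hx)
    have hco : ContinuousOn f K :=
      htu.continuousOn (Filter.Eventually.of_forall fun n => (u n).continuous.continuousOn).frequently
    have hrest : Continuous (K.restrict f) := continuousOn_iff_continuous_restrict.mp hco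
    have hopen : IsOpen ((Subtype.val : K → E) ⁻¹' (f ⁻¹' U)) := hrest.isOpen_preimage U hU
    obtain ⟨V, hVopen, hVeq⟩ := isOpen_induced_iff.mp hopen
    refine ⟨V, hVopen, ?_⟩
    ext x
    constructor
    · rintro ⟨hxU, hxK⟩
      have : (⟨x, hxK⟩ : K) ∈ (Subtype.val : K → E) ⁻¹' V := by
        rw [hVeq]; exact hxU
      exact ⟨this, hxK⟩
    · rintro ⟨hxV, hxK⟩
      have : (⟨x, hxK⟩ : K) ∈ (Subtype.val : K → E) ⁻¹' (f ⁻¹' U) := by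
        rw [← hVeq]; exact hxV
      exact ⟨this, hxK⟩
  refine ⟨⟨{ toFun := f, map_add' := hadd, map_smul' := hsmul }, hcont⟩, ?_⟩
  intro K hK V hV
  obtain ⟨N, hN⟩ := hconv K hK V hV
  exact eventually_atTop.2 ⟨N, hN⟩
end

section
/- Let F be a real compactly generated vector space with topology τF and let G be a real Hausdorff locally convex topological vector space with topology τG. If a sequence (ℓₙ) of continuous linear maps F → G converges to a continuous linear map ℓ uniformly on every τF-compact set (i.e. converges in the topology of uniform convergence on compact subsets of F), then (ℓₙ) converges to ℓ in the Kelleyfication of the subspace topology induced, on the set of maps F → G that are linear and continuous into (G, k τG), by the compact-open topology associated with τF and the Kelleyfication k τG. -/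
open Set Filter Topology

/-- Let `F` be a real compactly generated vector space and `G` a real Hausdorff
locally convex topological vector space. If a sequence of continuous linear maps `F → G`
converges to a continuous linear map `ℓ` uniformly on every compact set, then it converges to
`ℓ` in the Kelleyfication of the subspace topology induced, on the set of maps `F → G` which
are linear and continuous into `(G, Kelley tG)`, by the compact-open topology associated with
`tF` and `Kelley tG`. -/
theorem tendsto_kelley_of_uniform_on_compacts {F G : Type*}
    [AddCommGroup F] [Module ℝ F] [tF : TopologicalSpace F]
    [AddCommGroup G] [Module ℝ G] [tG : TopologicalSpace G]
    [IsTopologicalAddGroup G] [ContinuousSMul ℝ G] [LocallyConvexSpace ℝ G] [T2Space G]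
    (hF : IsCGVS tF)
    (u : ℕ → {f : F → G // IsLinearMap ℝ f ∧ Continuous[tF, Kelley tG] f})
    (ℓ : {f : F → G // IsLinearMap ℝ f ∧ Continuous[tF, Kelley tG] f})
    (hcont : ∀ n, Continuous (u n).1) (hℓcont : Continuous ℓ.1)
    (hconv : ∀ K : Set F, IsCompact K → ∀ V ∈ nhds (0 : G),
      ∀ᶠ n in Filter.atTop, ∀ x ∈ K, (u n).1 x - ℓ.1 x ∈ V) :
    Filter.Tendsto u Filter.atTop
      (@nhds _ (Kelley (TopologicalSpace.induced
        (Subtype.val : {f : F → G // IsLinearMap ℝ f ∧ Continuous[tF, Kelley tG] f} → F → G)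
        (coTop tF (Kelley tG)))) ℓ) := by
  classical
  set T' := TopologicalSpace.induced
      (Subtype.val : {f : F → G // IsLinearMap ℝ f ∧ Continuous[tF, Kelley tG] f} → F → G)
      (coTop tF (Kelley tG)) with hT'def
  -- Step 1: the key uniform statement for subbasic sets of the compact-open topology.
  have key : ∀ (K : Set F), IsCompact K → ∀ (V : Set G), (Kelley tG).IsOpen V →
      ℓ.1 '' K ⊆ V → ∀ᶠ n in Filter.atTop, (u n).1 '' K ⊆ V := by
    intro K hK V hV hℓV
    have hℓK : IsCompact (ℓ.1 '' K) := hK.image hℓcont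
    set A : Set G := ℓ.1 '' K ∪ ⋃ n, (u n).1 '' K with hAdef
    have hAcomp : IsCompact A := by
      refine isCompact_of_finite_subcover ?_
      intro ι U hUopen hcover
      obtain ⟨t₀, ht₀⟩ := hℓK.elim_finite_subcover U hUopen
        (subset_trans subset_union_left hcover)
      have hWopen : IsOpen (⋃ i ∈ t₀, U i) := isOpen_biUnion fun i _ => hUopen i
      obtain ⟨U₀, hU₀, hadd⟩ := compact_open_separated_add_right hℓK hWopen ht₀
      obtain ⟨N, hN⟩ := Filter.eventually_atTop.mp (hconv K hK U₀ hU₀)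
      have hsub : ∀ n : ℕ, ∃ t : Finset ι, (u n).1 '' K ⊆ ⋃ i ∈ t, U i := fun n =>
        (hK.image (hcont n)).elim_finite_subcover U hUopen
          (subset_trans (subset_trans (subset_iUnion (fun m => (u m).1 '' K) n)
            subset_union_right) hcover)
      choose t ht using hsub
      refine ⟨t₀ ∪ (Finset.range N).biUnion t, ?_⟩
      rintro a (ha | ha)
      · have : a ∈ ⋃ i ∈ t₀, U i := ht₀ ha
        simp only [Set.mem_iUnion, exists_prop] at this ⊢
        obtain ⟨i, hi, hai⟩ := this
        exact ⟨i, Finset.mem_union_left _ hi, hai⟩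
      · obtain ⟨n, hn⟩ := Set.mem_iUnion.mp ha
        by_cases hnN : N ≤ n
        · obtain ⟨x, hx, rfl⟩ := hn
          have hmem := Set.add_mem_add (Set.mem_image_of_mem ℓ.1 hx) (hN n hnN x hx)
          rw [show ℓ.1 x + ((u n).1 x - ℓ.1 x) = (u n).1 x from by abel] at hmem
          have : (u n).1 x ∈ ⋃ i ∈ t₀, U i := hadd hmem
          simp only [Set.mem_iUnion, exists_prop] at this ⊢
          obtain ⟨i, hi, hai⟩ := this
          exact ⟨i, Finset.mem_union_left _ hi, hai⟩
        · have : a ∈ ⋃ i ∈ t n, U i := ht n hn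
          simp only [Set.mem_iUnion, exists_prop] at this ⊢
          obtain ⟨i, hi, hai⟩ := this
          exact ⟨i, Finset.mem_union_right _
            (Finset.mem_biUnion.mpr ⟨n, Finset.mem_range.mpr (not_le.mp hnN), hi⟩), hai⟩
    obtain ⟨W, hWopen, hWA⟩ := hV A hAcomp
    have hℓW : ℓ.1 '' K ⊆ W := by
      intro a ha
      have : a ∈ V ∩ A := ⟨hℓV ha, Or.inl ha⟩
      rw [hWA] at this
      exact this.1
    obtain ⟨U₀, hU₀, hadd⟩ := compact_open_separated_add_right hℓK hWopen hℓW
    filter_upwards [hconv K hK U₀ hU₀] with n hn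
    rintro a ⟨x, hx, rfl⟩
    have hmem := Set.add_mem_add (Set.mem_image_of_mem ℓ.1 hx) (hn x hx)
    rw [show ℓ.1 x + ((u n).1 x - ℓ.1 x) = (u n).1 x from by abel] at hmem
    have h1 : (u n).1 x ∈ W := hadd hmem
    have h2 : (u n).1 x ∈ A :=
      Or.inr (Set.mem_iUnion.mpr ⟨n, Set.mem_image_of_mem _ hx⟩)
    have : (u n).1 x ∈ W ∩ A := ⟨h1, h2⟩
    rw [← hWA] at this
    exact this.1
  -- Step 2: convergence in the induced compact-open topology T'.
  have h1 : Filter.Tendsto u Filter.atTop (@nhds _ T' ℓ) := by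
    rw [hT'def, @nhds_induced, Filter.tendsto_comap_iff]
    refine TopologicalSpace.tendsto_nhds_generateFrom_iff.mpr ?_
    rintro s ⟨K, V, hK, hVopen, rfl⟩ hℓs
    exact key K hK V hVopen hℓs
  -- Step 3: the set consisting of the sequence and its limit is T'-compact.
  have hScomp : @IsCompact _ T' (insert ℓ (Set.range u)) :=
    @Filter.Tendsto.isCompact_insert_range _ T' u ℓ h1
  -- Step 4: conclude convergence in the Kelleyfication of T'.
  letI tK : TopologicalSpace {f : F → G // IsLinearMap ℝ f ∧ Continuous[tF, Kelley tG] f} :=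
    Kelley T'
  show Filter.Tendsto u Filter.atTop (@nhds _ tK ℓ)
  rw [tendsto_nhds]
  intro s hs hℓs
  obtain ⟨V, hVopen, hVS⟩ := hs (insert ℓ (Set.range u)) hScomp
  have hℓV : ℓ ∈ V := by
    have : ℓ ∈ s ∩ insert ℓ (Set.range u) := ⟨hℓs, Set.mem_insert _ _⟩
    rw [hVS] at this
    exact this.1
  have hVnhds : V ∈ @nhds _ T' ℓ := by
    letI := T'
    exact IsOpen.mem_nhds hVopen hℓV
  filter_upwards [h1 hVnhds] with n hn
  have : u n ∈ V ∩ insert ℓ (Set.range u) :=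
    ⟨hn, Set.mem_insert_of_mem _ ⟨n, rfl⟩⟩
  rw [← hVS] at this
  exact this.1
end

section
/- Let F₁ be a real locally convex topological vector space with topology 𝒰, and let F be the same vector space equipped with the Kelleyfication k𝒰. Let I = [a,b] with a < b and γ : I → F₁. Then γ is Riemann integrable to x with respect to the topology k𝒰 if and only if γ is Riemann integrable to x with respect to the topology 𝒰. -/
open Set Filter Topology

/-- For a real locally convex topological vector space `(X, U)`, a curve is
Riemann integrable to `x` with respect to the Kelleyfication `Kelley U` iff it is Riemann
integrable to `x` with respect to `U` itself. -/
theorem riemannIntegrable_kelley_iff {X : Type*} [AddCommGroup X] [Module ℝ X]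
    (U : TopologicalSpace X)
    (h1 : @IsTopologicalAddGroup X U _) (h2 : @ContinuousSMul ℝ X _ _ U)
    (h3 : @LocallyConvexSpace ℝ X _ _ _ _ U)
    (a b : ℝ) (hab : a < b) (γ : ℝ → X) (x : X) :
    RiemannIntegrableTo (Kelley U) a b γ x ↔ RiemannIntegrableTo U a b γ x := by
  constructor
  · intro h V hV
    have hle : Kelley U ≤ U := fun s hs K _ => ⟨s, hs, rfl⟩
    exact h V (nhds_mono hle hV)
  · intro h W hW
    obtain ⟨W', hW'sub, hW'open, hxW'⟩ := (@mem_nhds_iff X (Kelley U) x W).mp hW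
    by_contra hc
    push_neg at hc
    have key : ∀ n : ℕ, ∃ (k : ℕ) (t s : ℕ → ℝ),
        t 0 = a ∧ t k = b ∧ (∀ i < k, t i ≤ t (i + 1)) ∧
        (∀ i < k, t (i + 1) - t i < 1 / (n + 1)) ∧
        (∀ i < k, t i ≤ s i ∧ s i ≤ t (i + 1)) ∧
        (∑ i ∈ Finset.range k, (t (i + 1) - t i) • γ (s i)) ∉ W := by
      intro n
      have hpos : (0 : ℝ) < 1 / (n + 1) := by positivity
      obtain ⟨k, t, s, h⟩ := hc (1 / (n + 1)) hpos
      exact ⟨k, t, s, h⟩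
    choose k t s ht0 htb hmono hmesh htag hnot using key
    set S : ℕ → X := fun n => ∑ i ∈ Finset.range (k n), (t n (i + 1) - t n i) • γ (s n i)
      with hSdef
    have hS : Filter.Tendsto S Filter.atTop (@nhds X U x) := by
      intro V hV
      obtain ⟨δ, hδ, hδV⟩ := h V hV
      obtain ⟨N, hN⟩ := exists_nat_gt (1 / δ)
      refine Filter.mem_map.mpr (Filter.mem_of_superset (Filter.mem_atTop N) ?_)
      intro n hn
      refine hδV (k n) (t n) (s n) (ht0 n) (htb n) (hmono n) ?_ (htag n)
      intro i hi
      have h1 : t n (i + 1) - t n i < 1 / (n + 1) := hmesh n i hi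
      simp only [Set.mem_setOf_eq] at hn
      have hn' : (N : ℝ) ≤ n := Nat.cast_le.mpr hn
      have h2 : (1 : ℝ) / (n + 1) ≤ 1 / (N + 1) := by
        apply one_div_le_one_div_of_le (by positivity)
        linarith
      have h3 : (1 : ℝ) / (N + 1) < δ := by
        rw [div_lt_iff₀ (by positivity)]
        rw [div_lt_iff₀ hδ] at hN
        nlinarith
      linarith
    have hK : @IsCompact X U (insert x (Set.range S)) := by
      letI := U
      exact hS.isCompact_insert_range
    obtain ⟨V, hVopen, hVeq⟩ := hW'open (insert x (Set.range S)) hK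
    have hxV : x ∈ V := by
      have hx : x ∈ W' ∩ insert x (Set.range S) := ⟨hxW', Set.mem_insert _ _⟩
      rw [hVeq] at hx
      exact hx.1
    have hVnhds : V ∈ @nhds X U x :=
      (@mem_nhds_iff X U x V).mpr ⟨V, subset_rfl, hVopen, hxV⟩
    obtain ⟨n, hn'⟩ := Filter.mem_atTop_sets.mp (hS hVnhds)
    have hn : S n ∈ V := hn' n le_rfl
    have hSn : S n ∈ V ∩ insert x (Set.range S) :=
      ⟨hn, Set.mem_insert_of_mem _ ⟨n, rfl⟩⟩
    rw [← hVeq] at hSn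
    exact hnot n (hW'sub hSn.1)
end

section
/- Let F be a sequentially complete real locally convex topological vector space, let I = [a,b] be a compact real interval with a < b, and let γ : I → F be continuous. Then there exists x ∈ F such that γ is Riemann integrable to x on I. -/
open Set Filter Topology
open scoped Pointwise Uniformity
section AuxRiemann
open MeasureTheory

section Aux

lemma partMono {k : ℕ} {t : ℕ → ℝ} (h : ∀ i < k, t i ≤ t (i + 1)) :
    ∀ i j, i ≤ j → j ≤ k → t i ≤ t j := by
  intro i j hij hjk
  induction j with
  | zero => obtain rfl : i = 0 := Nat.le_zero.mp hij; exact le_rfl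
  | succ n ih =>
    rcases eq_or_lt_of_le hij with rfl | h'
    · exact le_rfl
    · exact le_trans (ih (Nat.lt_succ_iff.mp h') (le_trans (Nat.le_succ n) hjk)) (h n hjk)

/-- real step function attached to a tagged partition -/
noncomputable def stepF (g : ℝ → ℝ) (k : ℕ) (t s : ℕ → ℝ) (x : ℝ) : ℝ :=
  ∑ i ∈ Finset.range k, (Set.Ioc (t i) (t (i + 1))).indicator (fun _ => g (s i)) x

lemma stepF_integrable (g : ℝ → ℝ) (k : ℕ) (t s : ℕ → ℝ) (a b : ℝ) :
    MeasureTheory.Integrable (stepF g k t s) (volume.restrict (Set.Ioc a b)) := by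
  apply MeasureTheory.integrable_finset_sum
  intro i _
  exact (MeasureTheory.Integrable.indicator
    (MeasureTheory.integrableOn_const measure_Ioc_lt_top.ne)
    measurableSet_Ioc)

lemma stepF_integral {g : ℝ → ℝ} {k : ℕ} {t s : ℕ → ℝ} {a b : ℝ}
    (hmono : ∀ i < k, t i ≤ t (i + 1)) (ht0 : t 0 = a) (htk : t k = b) :
    ∫ x in Set.Ioc a b, stepF g k t s x =
      ∑ i ∈ Finset.range k, (t (i + 1) - t i) * g (s i) := by
  unfold stepF
  rw [MeasureTheory.integral_finset_sum _ (fun i _ => (MeasureTheory.Integrable.indicator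
    (MeasureTheory.integrableOn_const measure_Ioc_lt_top.ne) measurableSet_Ioc))]
  apply Finset.sum_congr rfl
  intro i hi
  have hik : i < k := Finset.mem_range.mp hi
  have hsub : Set.Ioc (t i) (t (i + 1)) ⊆ Set.Ioc a b := by
    apply Set.Ioc_subset_Ioc
    · rw [← ht0]; exact partMono hmono 0 i (Nat.zero_le _) (le_of_lt hik)
    · rw [← htk]; exact partMono hmono (i + 1) k hik le_rfl
  rw [MeasureTheory.integral_indicator measurableSet_Ioc,
    MeasureTheory.Measure.restrict_restrict measurableSet_Ioc,
    Set.inter_eq_self_of_subset_left hsub, MeasureTheory.setIntegral_const,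
    Real.volume_real_Ioc_of_le (hmono i hik), smul_eq_mul]

lemma stepF_eval {g : ℝ → ℝ} {k : ℕ} {t s : ℕ → ℝ} {a b x : ℝ}
    (hmono : ∀ i < k, t i ≤ t (i + 1)) (ht0 : t 0 = a) (htk : t k = b)
    (hx : x ∈ Set.Ioc a b) (hnb : ∀ i ≤ k, t i ≠ x) :
    ∃ i < k, t i < x ∧ x < t (i + 1) ∧ stepF g k t s x = g (s i) := by
  classical
  set P : ℕ → Prop := fun j => t j < x with hP
  have hP0 : P 0 := by rw [hP]; simp only; rw [ht0]; exact hx.1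
  set i := Nat.findGreatest P k with hi
  have hspec : P i := Nat.findGreatest_spec (Nat.zero_le k) hP0
  have hile : i ≤ k := Nat.findGreatest_le k
  have hik : i < k := by
    rcases eq_or_lt_of_le hile with h' | h'
    · exfalso; rw [hP] at hspec; rw [h', htk] at hspec; exact absurd hx.2 (not_le.mpr hspec)
    · exact h'
  have hxlt : x < t (i + 1) := by
    have h1 : ¬ P (i + 1) := Nat.findGreatest_is_greatest (Nat.lt_succ_self i) hik
    rw [hP] at h1
    exact lt_of_le_of_ne (not_lt.mp h1) (Ne.symm (hnb (i + 1) hik))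
  refine ⟨i, hik, hspec, hxlt, ?_⟩
  rw [stepF]
  rw [Finset.sum_eq_single_of_mem i (Finset.mem_range.mpr hik)]
  · exact Set.indicator_of_mem (Set.mem_Ioc.mpr ⟨hspec, le_of_lt hxlt⟩) _
  · intro j hj hne
    apply Set.indicator_of_notMem
    rcases lt_or_gt_of_ne hne with hji | hji
    · intro hmem
      have : t (j + 1) ≤ t i := partMono hmono (j + 1) i hji hile
      exact absurd hmem.2 (not_le.mpr (lt_of_le_of_lt this hspec))
    · intro hmem
      have : t (i + 1) ≤ t j := partMono hmono (i + 1) j hji (le_of_lt (Finset.mem_range.mp hj))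
      exact absurd hmem.1 (not_lt.mpr (le_trans (le_of_lt hxlt) this))

end Aux

section Main

variable {X : Type*} [AddCommGroup X] [Module ℝ X] [TopologicalSpace X]
  [IsTopologicalAddGroup X] [ContinuousSMul ℝ X] [LocallyConvexSpace ℝ X]

lemma riemann_diff_mem {a b : ℝ} (hab : a < b) {γ : ℝ → X} {W : Set X} (hWc : Convex ℝ W)
    {δ : ℝ}
    (hunif : ∀ p ∈ Set.Icc a b, ∀ q ∈ Set.Icc a b, |p - q| < δ → γ p - γ q ∈ W)
    {k k' : ℕ} {t s t' s' : ℕ → ℝ}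
    (ht0 : t 0 = a) (htk : t k = b) (hmono : ∀ i < k, t i ≤ t (i + 1))
    (hmesh : ∀ i < k, t (i + 1) - t i < δ / 2)
    (htag : ∀ i < k, t i ≤ s i ∧ s i ≤ t (i + 1))
    (ht0' : t' 0 = a) (htk' : t' k' = b) (hmono' : ∀ i < k', t' i ≤ t' (i + 1))
    (hmesh' : ∀ i < k', t' (i + 1) - t' i < δ / 2)
    (htag' : ∀ i < k', t' i ≤ s' i ∧ s' i ≤ t' (i + 1)) :
    (∑ i ∈ Finset.range k, (t (i + 1) - t i) • γ (s i)) -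
      (∑ i ∈ Finset.range k', (t' (i + 1) - t' i) • γ (s' i)) ∈
      closure ((b - a) • W) := by
  classical
  have hba : (0 : ℝ) < b - a := sub_pos.mpr hab
  set z := (∑ i ∈ Finset.range k, (t (i + 1) - t i) • γ (s i)) -
    (∑ i ∈ Finset.range k', (t' (i + 1) - t' i) • γ (s' i)) with hz
  by_contra hzC
  obtain ⟨f, u, hfu, huz⟩ := geometric_hahn_banach_closed_point
    ((hWc.smul (b - a)).closure) isClosed_closure hzC
  set g : ℝ → ℝ := fun r => f (γ r) with hg
  -- value of f on Riemann sums
  have hsum : ∀ (m : ℕ) (τ σ : ℕ → ℝ),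
      f (∑ i ∈ Finset.range m, (τ (i + 1) - τ i) • γ (σ i)) =
        ∑ i ∈ Finset.range m, (τ (i + 1) - τ i) * g (σ i) := by
    intro m τ σ
    rw [map_sum]
    exact Finset.sum_congr rfl fun i _ => by rw [_root_.map_smul, smul_eq_mul]
  have hfz : f z = ∫ x in Set.Ioc a b, (stepF g k t s x - stepF g k' t' s' x) := by
    rw [hz, map_sub, hsum, hsum, ← stepF_integral hmono ht0 htk,
      ← stepF_integral hmono' ht0' htk',
      MeasureTheory.integral_sub (stepF_integrable g k t s a b)
        (stepF_integrable g k' t' s' a b)]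
  -- a.e. pointwise bound
  have hIcc : ∀ {m : ℕ} {τ : ℕ → ℝ}, τ 0 = a → τ m = b → (∀ i < m, τ i ≤ τ (i + 1)) →
      ∀ i < m, a ≤ τ i ∧ τ (i + 1) ≤ b := by
    intro m τ h0 hm hmo i him
    constructor
    · rw [← h0]; exact partMono hmo 0 i (Nat.zero_le _) (le_of_lt him)
    · rw [← hm]; exact partMono hmo (i + 1) m him le_rfl
  set A : Set ℝ := (t '' Set.Iic k) ∪ (t' '' Set.Iic k') with hA
  have hAfin : A.Finite := ((Set.finite_Iic k).image t).union ((Set.finite_Iic k').image t')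
  have hAnull : ∀ᵐ x ∂(volume.restrict (Set.Ioc a b)), x ∉ A := by
    refine MeasureTheory.ae_restrict_of_ae ?_
    rw [MeasureTheory.ae_iff]
    simpa using hAfin.measure_zero volume
  have hmem : ∀ᵐ x ∂(volume.restrict (Set.Ioc a b)), x ∈ Set.Ioc a b :=
    MeasureTheory.ae_restrict_mem measurableSet_Ioc
  have hbound : ∀ᵐ x ∂(volume.restrict (Set.Ioc a b)),
      stepF g k t s x - stepF g k' t' s' x ≤ u / (b - a) := by
    filter_upwards [hAnull, hmem] with x hxA hxI
    have hnb : ∀ i ≤ k, t i ≠ x := fun i hi h =>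
      hxA (Or.inl ⟨i, hi, h⟩)
    have hnb' : ∀ i ≤ k', t' i ≠ x := fun i hi h =>
      hxA (Or.inr ⟨i, hi, h⟩)
    obtain ⟨i, hik, hti, hxi, hFi⟩ := stepF_eval (g := g) (s := s) hmono ht0 htk hxI hnb
    obtain ⟨j, hjk, htj, hxj, hFj⟩ := stepF_eval (g := g) (s := s') hmono' ht0' htk' hxI hnb'
    have hsi : s i ∈ Set.Icc a b := by
      obtain ⟨h1, h2⟩ := hIcc ht0 htk hmono i hik
      exact ⟨le_trans h1 (htag i hik).1, le_trans (htag i hik).2 h2⟩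
    have hsj : s' j ∈ Set.Icc a b := by
      obtain ⟨h1, h2⟩ := hIcc ht0' htk' hmono' j hjk
      exact ⟨le_trans h1 (htag' j hjk).1, le_trans (htag' j hjk).2 h2⟩
    have hdist : |s i - s' j| < δ := by
      have h1 : |s i - x| < δ / 2 := by
        rw [abs_sub_lt_iff]
        constructor
        · calc s i - x ≤ t (i + 1) - t i := by
                have := (htag i hik).2
                have := hti
                linarith [(htag i hik).2, hti]
          _ < δ / 2 := hmesh i hik
        · calc x - s i ≤ t (i + 1) - t i := by linarith [(htag i hik).1, le_of_lt hxi]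
          _ < δ / 2 := hmesh i hik
      have h2 : |x - s' j| < δ / 2 := by
        rw [abs_sub_lt_iff]
        constructor
        · calc x - s' j ≤ t' (j + 1) - t' j := by linarith [(htag' j hjk).1, le_of_lt hxj]
          _ < δ / 2 := hmesh' j hjk
        · calc s' j - x ≤ t' (j + 1) - t' j := by linarith [(htag' j hjk).2, htj]
          _ < δ / 2 := hmesh' j hjk
      calc |s i - s' j| ≤ |s i - x| + |x - s' j| := abs_sub_le _ _ _
        _ < δ / 2 + δ / 2 := add_lt_add h1 h2
        _ = δ := by ring
    have hW : γ (s i) - γ (s' j) ∈ W := hunif _ hsi _ hsj hdist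
    have hC : (b - a) • (γ (s i) - γ (s' j)) ∈ closure ((b - a) • W) :=
      subset_closure (Set.smul_mem_smul_set hW)
    have := hfu _ hC
    rw [_root_.map_smul, smul_eq_mul] at this
    rw [hFi, hFj]
    have : f (γ (s i) - γ (s' j)) < u / (b - a) := by
      rw [lt_div_iff₀ hba]
      linarith [this]
    rw [map_sub] at this
    exact le_of_lt this
  -- integrate the bound
  have hle : f z ≤ u := by
    rw [hfz]
    have hint1 : MeasureTheory.Integrable
        (fun x => stepF g k t s x - stepF g k' t' s' x)
        (volume.restrict (Set.Ioc a b)) :=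
      (stepF_integrable g k t s a b).sub (stepF_integrable g k' t' s' a b)
    have hint2 : MeasureTheory.Integrable (fun _ : ℝ => u / (b - a))
        (volume.restrict (Set.Ioc a b)) :=
      MeasureTheory.integrableOn_const measure_Ioc_lt_top.ne
    calc (∫ x in Set.Ioc a b, (stepF g k t s x - stepF g k' t' s' x))
        ≤ ∫ _ in Set.Ioc a b, u / (b - a) :=
          MeasureTheory.integral_mono_ae hint1 hint2 hbound
      _ = u := by
          rw [MeasureTheory.setIntegral_const, Real.volume_real_Ioc_of_le (le_of_lt hab),
            smul_eq_mul]
          field_simp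
  exact absurd hle (not_le.mpr huz)

lemma unifCont {a b : ℝ} {γ : ℝ → X} (hγ : ContinuousOn γ (Set.Icc a b)) :
    ∀ W ∈ 𝓝 (0 : X), ∃ δ : ℝ, 0 < δ ∧
      ∀ p ∈ Set.Icc a b, ∀ q ∈ Set.Icc a b, |p - q| < δ → γ p - γ q ∈ W := by
  intro W hW
  letI uX : UniformSpace X := IsTopologicalAddGroup.rightUniformSpace X
  have huc : UniformContinuousOn γ (Set.Icc a b) :=
    isCompact_Icc.uniformContinuousOn_of_continuous hγ
  have hent : {p : X × X | p.2 - p.1 ∈ W} ∈ 𝓤 X := by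
    rw [uniformity_eq_comap_nhds_zero']
    exact mem_of_superset (preimage_mem_comap (m := fun p : X × X => p.2 + -p.1) hW)
      (fun p hp => by rw [Set.mem_setOf_eq, sub_eq_add_neg]; exact hp)
  have h : {x : ℝ × ℝ | γ x.2 - γ x.1 ∈ W} ∈
      (𝓤 ℝ ⊓ 𝓟 (Set.Icc a b ×ˢ Set.Icc a b)) := huc hent
  rw [Filter.mem_inf_iff_superset] at h
  obtain ⟨t1, ht1, t2, ht2, hsub⟩ := h
  rw [Metric.mem_uniformity_dist] at ht1
  obtain ⟨ε, hε, hdist⟩ := ht1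
  rw [Filter.mem_principal] at ht2
  refine ⟨ε, hε, fun p hp q hq hpq => ?_⟩
  have h1 : (q, p) ∈ t1 := hdist (by rw [Real.dist_eq, abs_sub_comm]; exact hpq)
  have h2 : (q, p) ∈ t2 := ht2 ⟨hq, hp⟩
  exact hsub ⟨h1, h2⟩

lemma goodNhds {c : ℝ} (hc : 0 < c) :
    ∀ V ∈ 𝓝 (0 : X), ∃ W ∈ 𝓝 (0 : X), Convex ℝ W ∧ closure (c • W) ⊆ V := by
  intro V hV
  obtain ⟨V2, hV2, hV2add⟩ := exists_nhds_zero_half hV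
  have hW0 : c⁻¹ • V2 ∈ 𝓝 (0 : X) := (set_smul_mem_nhds_zero_iff (inv_ne_zero hc.ne')).mpr hV2
  obtain ⟨W, ⟨hWmem, hWconv⟩, hWsub⟩ := (LocallyConvexSpace.convex_basis_zero ℝ X).mem_iff.mp hW0
  refine ⟨W, hWmem, hWconv, ?_⟩
  have hcW : c • W ⊆ V2 := by
    rintro y ⟨w, hw, rfl⟩
    obtain ⟨v, hv, rfl⟩ := hWsub hw
    show c • (c⁻¹ • v) ∈ V2
    rw [smul_inv_smul₀ hc.ne']
    exact hv
  intro x hx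
  rw [mem_closure_iff_nhds_zero] at hx
  obtain ⟨y, hy, hyx⟩ := hx (-V2) (neg_mem_nhds_zero X hV2)
  have hxy : x - y ∈ V2 := by
    rw [Set.mem_neg] at hyx
    simpa using hyx
  have := hV2add y (hcW hy) (x - y) hxy
  simpa using this

end Main

end AuxRiemann

/-- In a sequentially complete real locally convex topological vector space,
every continuous curve on a compact interval `[a,b]` (with `a < b`) is Riemann integrable
to some element. -/
theorem exists_riemannIntegral_of_continuous {X : Type*} [AddCommGroup X] [Module ℝ X]
    [U : TopologicalSpace X] [IsTopologicalAddGroup X] [ContinuousSMul ℝ X]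
    [LocallyConvexSpace ℝ X] (hsc : SeqComplete U)
    (a b : ℝ) (hab : a < b) (γ : ℝ → X) (hγ : ContinuousOn γ (Set.Icc a b)) :
    ∃ x : X, RiemannIntegrableTo U a b γ x := by
  have hba : (0 : ℝ) < b - a := sub_pos.mpr hab
  have hUC := unifCont (X := X) hγ
  have hgood := goodNhds (X := X) hba
  set tt : ℕ → ℕ → ℝ := fun n i => a + (i : ℝ) * ((b - a) / 2 ^ n) with htt
  have htt0 : ∀ n, tt n 0 = a := by intro n; simp [htt]
  have httk : ∀ n, tt n (2 ^ n) = b := by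
    intro n
    have h2 : ((2 : ℝ) ^ n) ≠ 0 := by positivity
    simp only [htt]
    push_cast
    field_simp
    ring
  have httmesh : ∀ n i, tt n (i + 1) - tt n i = (b - a) / 2 ^ n := by
    intro n i; simp only [htt]; push_cast; ring
  have httmono : ∀ n, ∀ i, tt n i ≤ tt n (i + 1) := by
    intro n i
    have h : (0 : ℝ) ≤ (b - a) / 2 ^ n := by positivity
    rw [← sub_nonneg, httmesh n i]
    exact h
  set u : ℕ → X := fun n =>
    ∑ i ∈ Finset.range (2 ^ n), (tt n (i + 1) - tt n i) • γ (tt n i) with hu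
  have hmesh_small : ∀ d : ℝ, 0 < d → ∃ N : ℕ, ∀ n ≥ N, (b - a) / 2 ^ n < d := by
    intro d hd
    obtain ⟨N, hN⟩ := exists_nat_gt ((b - a) / d)
    refine ⟨N, fun n hn => ?_⟩
    have h1 : (N : ℝ) < 2 ^ n := by
      calc (N : ℝ) ≤ n := by exact_mod_cast hn
        _ < 2 ^ n := by exact_mod_cast Nat.lt_two_pow_self
    have h2 : (0 : ℝ) < 2 ^ n := by positivity
    rw [div_lt_iff₀ h2]
    rw [div_lt_iff₀ hd] at hN
    nlinarith
  have hcauchy : ∀ V ∈ 𝓝 (0 : X), ∃ N, ∀ m ≥ N, ∀ n ≥ N, u m - u n ∈ V := by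
    intro V hV
    obtain ⟨W, hWmem, hWconv, hWsub⟩ := hgood V hV
    obtain ⟨δ, hδ, hunif⟩ := hUC W hWmem
    obtain ⟨N, hN⟩ := hmesh_small (δ / 2) (by positivity)
    refine ⟨N, fun m hm n hn => ?_⟩
    exact hWsub (riemann_diff_mem hab hWconv hunif (htt0 m) (httk m)
      (fun i _ => httmono m i) (fun i _ => by rw [httmesh]; exact hN m hm)
      (fun i _ => ⟨le_rfl, httmono m i⟩) (htt0 n) (httk n)
      (fun i _ => httmono n i) (fun i _ => by rw [httmesh]; exact hN n hn)
      (fun i _ => ⟨le_rfl, httmono n i⟩))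
  obtain ⟨x, hx⟩ := hsc u hcauchy
  refine ⟨x, ?_⟩
  intro V hV
  have hV0 : {y : X | x + y ∈ V} ∈ 𝓝 (0 : X) := by
    have hc : ContinuousAt (fun y : X => x + y) 0 :=
      (continuous_const.add continuous_id).continuousAt
    have := hc.preimage_mem_nhds (by simpa using hV)
    exact this
  obtain ⟨V1, hV1, hV1add⟩ := exists_nhds_zero_half hV0
  obtain ⟨W, hWmem, hWconv, hWsub⟩ := hgood V1 hV1
  obtain ⟨δ, hδ, hunif⟩ := hUC W hWmem
  refine ⟨δ / 2, by positivity, ?_⟩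
  intro k t s ht0 htk hmono hmesh htag
  obtain ⟨N1, hN1⟩ := hmesh_small (δ / 2) (by positivity)
  have hxmem : {y : X | y - x ∈ V1} ∈ 𝓝 x := by
    have hc : ContinuousAt (fun y : X => y - x) x :=
      (continuous_id.sub continuous_const).continuousAt
    have := hc.preimage_mem_nhds (by simpa using hV1)
    exact this
  have hev : ∀ᶠ n in atTop, u n - x ∈ V1 := hx hxmem
  obtain ⟨n, hn1, hn2⟩ := (hev.and (eventually_ge_atTop N1)).exists
  have hdiff := riemann_diff_mem hab hWconv hunif ht0 htk hmono hmesh htag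
    (htt0 n) (httk n) (fun i _ => httmono n i)
    (fun i _ => by rw [httmesh]; exact hN1 n hn2)
    (fun i _ => ⟨le_rfl, httmono n i⟩)
  have h1 : (∑ i ∈ Finset.range k, (t (i + 1) - t i) • γ (s i)) - u n ∈ V1 := hWsub hdiff
  have h2 := hV1add _ h1 _ hn1
  have heq : x + (((∑ i ∈ Finset.range k, (t (i + 1) - t i) • γ (s i)) - u n) + (u n - x)) =
      ∑ i ∈ Finset.range k, (t (i + 1) - t i) • γ (s i) := by abel
  have h3 : x + (((∑ i ∈ Finset.range k, (t (i + 1) - t i) • γ (s i)) - u n) + (u n - x)) ∈ V := h2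
  rwa [heq] at h3
end

section
/- (Mean value theorem) Let E be a real locally convex topological vector space and let U ⊆ E be closed and convex. Let c : [0,1] → E be continuous at the points 0 and 1, with c(0) = 0 ∈ U, and suppose there is a function d : (0,1) → E such that for every t ∈ (0,1), c is differentiable to d(t) at t and d(t) ∈ U. Then c(1) ∈ U. -/
open Set Filter Topology

/-- Mean value theorem: Let `U` be closed and convex in a real locally convex
topological vector space `E`, and let `c : [0,1] → E` be continuous at `0` and `1` with
`c 0 = 0 ∈ U`. If `c` is differentiable at every `t ∈ (0,1)` to some `d t ∈ U`, then
`c 1 ∈ U`. -/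
theorem mean_value_theorem_closed_convex {E : Type*} [AddCommGroup E] [Module ℝ E]
    [T : TopologicalSpace E] [IsTopologicalAddGroup E] [ContinuousSMul ℝ E]
    [LocallyConvexSpace ℝ E]
    (U : Set E) (hUc : IsClosed U) (hUconv : Convex ℝ U)
    (c : ℝ → E)
    (hc0 : ContinuousWithinAt c (Set.Icc 0 1) 0)
    (hc1 : ContinuousWithinAt c (Set.Icc 0 1) 1)
    (hc00 : c 0 = 0) (h0U : (0 : E) ∈ U)
    (d : ℝ → E)
    (hd : ∀ t ∈ Set.Ioo (0 : ℝ) 1, DiffTo T (Set.Icc 0 1) c t (d t) ∧ d t ∈ U) :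
    c 1 ∈ U := by
  by_contra h1
  obtain ⟨f, u, hfU, hfc1⟩ := geometric_hahn_banach_closed_point hUconv hUc h1
  set g : ℝ → ℝ := fun t => f (c t) with hg
  -- derivative of g on the open interval
  have hderiv : ∀ t ∈ Set.Ioo (0 : ℝ) 1, HasDerivAt g (f (d t)) t := by
    intro t ht
    rw [hasDerivAt_iff_tendsto_slope]
    have h2 : Tendsto (fun y => (y - t)⁻¹ • (c y - c t)) (𝓝[≠] t) (𝓝 (d t)) := by
      intro W hW
      obtain ⟨δ, hδ, hδ'⟩ := (hd t ht).1 W hW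
      rw [mem_map]
      have hball : Metric.ball t (min δ (min t (1 - t))) \ {t} ∈ 𝓝[≠] t := by
        apply diff_mem_nhdsWithin_compl
        exact Metric.ball_mem_nhds t (by simp [hδ, ht.1, ht.2, sub_pos])
      filter_upwards [hball] with y hy
      obtain ⟨hy1, hy2⟩ := hy
      rw [Metric.mem_ball, Real.dist_eq] at hy1
      have hyt : y ≠ t := hy2
      have habs : 0 < |y - t| := abs_pos.mpr (sub_ne_zero.mpr hyt)
      have h3 : |y - t| < min t (1 - t) := lt_of_lt_of_le hy1 (min_le_right _ _)
      have h4 := abs_lt.mp (lt_of_lt_of_le h3 (min_le_left _ _))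
      have h5 := abs_lt.mp (lt_of_lt_of_le h3 (min_le_right _ _))
      have hmem : t + (y - t) ∈ Set.Icc (0 : ℝ) 1 := by
        constructor <;> [linarith [ht.1]; linarith [ht.2]]
      have := hδ' (y - t) hmem habs (lt_of_lt_of_le hy1 (min_le_left _ _))
      simpa using this
    have h3 : Tendsto (fun y => f ((y - t)⁻¹ • (c y - c t))) (𝓝[≠] t) (𝓝 (f (d t))) :=
      (f.continuous.tendsto (d t)).comp h2
    refine h3.congr fun y => ?_
    simp [slope, hg, map_smul, map_sub]
  -- continuity of g on [0,1]
  have hgcont : ContinuousOn g (Set.Icc 0 1) := by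
    intro t ht
    rcases eq_or_ne t 0 with rfl | ht0
    · exact (f.continuous.continuousAt).comp_continuousWithinAt hc0
    rcases eq_or_ne t 1 with rfl | ht1
    · exact (f.continuous.continuousAt).comp_continuousWithinAt hc1
    have htIoo : t ∈ Set.Ioo (0 : ℝ) 1 :=
      ⟨lt_of_le_of_ne ht.1 (Ne.symm ht0), lt_of_le_of_ne ht.2 ht1⟩
    exact (hderiv t htIoo).continuousAt.continuousWithinAt
  -- auxiliary function
  set φ : ℝ → ℝ := fun t => u * t - g t with hφ
  have hφcont : ContinuousOn φ (Set.Icc 0 1) :=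
    ((continuous_const.mul continuous_id).continuousOn).sub hgcont
  have hφderiv : ∀ x ∈ interior (Set.Icc (0 : ℝ) 1), 0 < deriv φ x := by
    intro x hx
    rw [interior_Icc] at hx
    have hD : HasDerivAt φ (u - f (d x)) x := by
      have h1 : HasDerivAt (fun t : ℝ => u * t) u x := by
        simpa using (hasDerivAt_id x).const_mul u
      exact h1.sub (hderiv x hx)
    rw [hD.deriv]
    have := hfU (d x) (hd x hx).2
    linarith
  have hmono : StrictMonoOn φ (Set.Icc 0 1) :=
    strictMonoOn_of_deriv_pos (convex_Icc 0 1) hφcont hφderiv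
  have h01 : φ 0 < φ 1 :=
    hmono (Set.left_mem_Icc.mpr zero_le_one) (Set.right_mem_Icc.mpr zero_le_one) zero_lt_one
  have hφ0 : φ 0 = 0 := by simp [hφ, hg, hc00]
  have hφ1 : φ 1 = u - f (c 1) := by simp [hφ, hg]
  rw [hφ0, hφ1] at h01
  linarith
end
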